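/- arXiv:2008.10466 — 7 statements merged into one kernel-verified Lean document; each statement's English description precedes it below -/
import Mathlib

section
/- Let g(Z) = ‖Z‖_{2,0} for Z ∈ ℝ^{n×r}. Then for every U, Γ ∈ ℝ^{n×r}, the subderivative dg(U)(Γ) = 0 if every nonzero column index of Γ is a nonzero column index of U (i.e. J_Γ ⊆ J_U), and dg(U)(Γ) = +∞ otherwise. -/
open Filter Topology

/-- The column `ℓ_{2,0}`-norm: the number of nonzero columns. -/
noncomputable def l20 {α β : Type*} [Fintype α] [Fintype β] (A : Matrix α β ℝ) : ℕ :=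
  {j : β | (fun i => A i j) ≠ 0}.ncard

/-- The subderivative `dh(x)(w) = liminf_{t↓0, w'→w} (h(x + t w') − h(x))/t`,
valued in `[−∞, +∞]`. -/
noncomputable def subderiv {E : Type*} [AddCommGroup E] [Module ℝ E] [TopologicalSpace E]
    (h : E → ℝ) (x w : E) : EReal :=
  Filter.liminf (fun p : ℝ × E => (((h (x + p.1 • p.2) - h x) / p.1 : ℝ) : EReal))
    ((𝓝[>] (0 : ℝ)) ×ˢ 𝓝 w)

lemma col_ne_isOpen {n r : ℕ} (i : Fin r) :
    IsOpen {Z : Matrix (Fin n) (Fin r) ℝ | (fun k => Z k i) ≠ 0} := by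
  have hc : Continuous (fun Z : Matrix (Fin n) (Fin r) ℝ => (fun k => Z k i)) :=
    continuous_pi fun k => (continuous_apply i).comp (continuous_apply k)
  exact (isOpen_compl_singleton (x := (0 : Fin n → ℝ))).preimage hc

lemma l20_mono {n r : ℕ} {Z W : Matrix (Fin n) (Fin r) ℝ}
    (h : ∀ j, (fun k => Z k j) ≠ 0 → (fun k => W k j) ≠ 0) : l20 Z ≤ l20 W :=
  Set.ncard_le_ncard (fun j hj => h j hj) (Set.toFinite _)

/-- for `g(Z) = ‖Z‖_{2,0}`, `dg(U)(Γ) = 0` if `J_Γ ⊆ J_U`, and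
`dg(U)(Γ) = +∞` otherwise. -/
theorem subderiv_l20 {n r : ℕ} (U Γ : Matrix (Fin n) (Fin r) ℝ) :
    ((∀ i : Fin r, (fun k => Γ k i) ≠ 0 → (fun k => U k i) ≠ 0) →
        subderiv (fun Z => (l20 Z : ℝ)) U Γ = 0) ∧
      (¬ (∀ i : Fin r, (fun k => Γ k i) ≠ 0 → (fun k => U k i) ≠ 0) →
        subderiv (fun Z => (l20 Z : ℝ)) U Γ = ⊤) := by
  set F : Filter (ℝ × Matrix (Fin n) (Fin r) ℝ) := (𝓝[>] (0 : ℝ)) ×ˢ 𝓝 Γ with hF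
  set q : ℝ × Matrix (Fin n) (Fin r) ℝ → EReal :=
    fun p => ((((l20 (U + p.1 • p.2) : ℝ) - (l20 U : ℝ)) / p.1 : ℝ) : EReal) with hq
  have hFle : F ≤ 𝓝 (0, Γ) := by
    rw [nhds_prod_eq]
    exact Filter.prod_mono nhdsWithin_le_nhds le_rfl
  have hφ : Filter.Tendsto (fun p : ℝ × Matrix (Fin n) (Fin r) ℝ => U + p.1 • p.2) F (𝓝 U) := by
    have hc : Continuous (fun p : ℝ × Matrix (Fin n) (Fin r) ℝ => U + p.1 • p.2) :=
      continuous_const.add (continuous_fst.smul continuous_snd)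
    have := hc.continuousAt (x := ((0 : ℝ), Γ))
    rw [ContinuousAt, zero_smul, add_zero] at this
    exact this.mono_left hFle
  -- all nonzero columns of U stay nonzero, eventually
  have key : ∀ᶠ p : ℝ × Matrix (Fin n) (Fin r) ℝ in F,
      ∀ j : Fin r, (fun k => U k j) ≠ 0 → (fun k => (U + p.1 • p.2) k j) ≠ 0 := by
    have hV : IsOpen (⋂ j : Fin r,
        {Z : Matrix (Fin n) (Fin r) ℝ | (fun k => U k j) ≠ 0 → (fun k => Z k j) ≠ 0}) := by
      refine isOpen_iInter_of_finite fun j => ?_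
      by_cases hj : (fun k => U k j) ≠ 0
      · simpa [hj] using col_ne_isOpen (n := n) j
      · simp [hj]
    have hUV : U ∈ ⋂ j : Fin r,
        {Z : Matrix (Fin n) (Fin r) ℝ | (fun k => U k j) ≠ 0 → (fun k => Z k j) ≠ 0} := by
      simp only [Set.mem_iInter, Set.mem_setOf_eq]
      exact fun j h => h
    filter_upwards [hφ (hV.mem_nhds hUV)] with p hp
    simp only [Set.mem_preimage, Set.mem_iInter, Set.mem_setOf_eq] at hp
    exact hp
  have ht : ∀ᶠ p : ℝ × Matrix (Fin n) (Fin r) ℝ in F, 0 < p.1 :=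
    Filter.Eventually.prod_inl (self_mem_nhdsWithin) _
  constructor
  · -- J_Γ ⊆ J_U case
    intro h
    have hge : (0 : EReal) ≤ Filter.liminf q F := by
      refine Filter.le_liminf_of_le (by isBoundedDefault) ?_
      filter_upwards [key, ht] with p hp hp1
      have hle : l20 U ≤ l20 (U + p.1 • p.2) := l20_mono hp
      have : (0 : ℝ) ≤ ((l20 (U + p.1 • p.2) : ℝ) - (l20 U : ℝ)) / p.1 := by
        apply div_nonneg _ hp1.le
        have := Nat.cast_le (α := ℝ).mpr hle
        linarith
      simpa only [hq] using EReal.coe_nonneg.mpr this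
    have hle : Filter.liminf q F ≤ 0 := by
      refine Filter.liminf_le_of_frequently_le' ?_
      have htend : Filter.Tendsto (fun t : ℝ => (t, Γ)) (𝓝[>] (0 : ℝ)) F :=
        Filter.Tendsto.prodMk tendsto_id tendsto_const_nhds
      refine htend.frequently (Filter.Eventually.frequently ?_)
      have hjj : ∀ j : Fin r, ∀ᶠ t : ℝ in 𝓝[>] (0 : ℝ),
          ((fun k => (U + t • Γ) k j) ≠ 0 ↔ (fun k => U k j) ≠ 0) := by
        intro j
        by_cases hj : (fun k => Γ k j) = 0
        · refine Filter.Eventually.of_forall fun t => ?_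
          have : (fun k => (U + t • Γ) k j) = fun k => U k j := by
            funext k
            have : Γ k j = 0 := congrFun hj k
            simp [Matrix.add_apply, Matrix.smul_apply, this]
          rw [this]
        · have hUj := h j hj
          have hcont : Continuous (fun t : ℝ => (fun k => (U + t • Γ) k j)) := by
            refine continuous_pi fun k => ?_
            simp only [Matrix.add_apply, Matrix.smul_apply, smul_eq_mul]
            exact continuous_const.add (continuous_id.mul continuous_const)
          have h0 : (fun k => (U + (0 : ℝ) • Γ) k j) ≠ 0 := by
            simpa using hUj
          have hev : ∀ᶠ t : ℝ in 𝓝 (0 : ℝ), (fun k => (U + t • Γ) k j) ≠ 0 :=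
            hcont.continuousAt (x := (0 : ℝ)) (isOpen_compl_singleton.mem_nhds h0)
          filter_upwards [nhdsWithin_le_nhds hev] with t htj
          exact iff_of_true htj hUj
      filter_upwards [(Filter.eventually_all).mpr hjj, self_mem_nhdsWithin] with t hall
        (htpos : t ∈ Set.Ioi (0 : ℝ))
      have hset : {j : Fin r | (fun k => (U + t • Γ) k j) ≠ 0}
          = {j : Fin r | (fun k => U k j) ≠ 0} := by
        ext j; exact hall j
      have hl : l20 (U + t • Γ) = l20 U := by unfold l20; rw [hset]
      have : q (t, Γ) = ((0 : ℝ) : EReal) := by simp [hq, hl]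
      rw [this]
      norm_num
    have : subderiv (fun Z => (l20 Z : ℝ)) U Γ = Filter.liminf q F := rfl
    rw [this]
    exact le_antisymm hle hge
  · intro h
    push_neg at h
    obtain ⟨i, hΓi, hUi⟩ := h
    have hUi0 : (fun k => U k i) = 0 := hUi
    rw [show subderiv (fun Z => (l20 Z : ℝ)) U Γ = Filter.liminf q F from rfl,
      EReal.eq_top_iff_forall_lt]
    intro y
    have hc : (0 : ℝ) < max y 1 := lt_of_lt_of_le one_pos (le_max_right _ _)
    have hev : ∀ᶠ p : ℝ × Matrix (Fin n) (Fin r) ℝ in F, ((y : EReal) + 1 ≤ q p) := by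
      have hsmall : ∀ᶠ p : ℝ × Matrix (Fin n) (Fin r) ℝ in F, p.1 < 1 / (max y 1 + 1) := by
        rw [hF]
        have h' : ∀ᶠ t : ℝ in 𝓝[>] (0 : ℝ), t < 1 / (max y 1 + 1) := by
          have : Set.Ioo (0 : ℝ) (1 / (max y 1 + 1)) ∈ 𝓝[>] (0 : ℝ) :=
            Ioo_mem_nhdsGT_of_mem ⟨le_refl _, by positivity⟩
          filter_upwards [this] with t htm
          exact htm.2
        exact Filter.tendsto_fst.eventually h'
      have hw : ∀ᶠ p : ℝ × Matrix (Fin n) (Fin r) ℝ in F, (fun k => p.2 k i) ≠ 0 := by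
        rw [hF]
        exact Filter.tendsto_snd.eventually (((col_ne_isOpen i).mem_nhds hΓi) :
          ∀ᶠ W : Matrix (Fin n) (Fin r) ℝ in 𝓝 Γ, (fun k => W k i) ≠ 0)
      filter_upwards [key, ht, hsmall, hw] with p hp hp1 hpsmall hpw
      have hcoli : (fun k => (U + p.1 • p.2) k i) ≠ 0 := by
        intro hcontra
        apply hpw
        funext k
        have hk := congrFun hcontra k
        have hU0 : U k i = 0 := congrFun hUi0 k
        simp only [Matrix.add_apply, Matrix.smul_apply, smul_eq_mul, hU0, zero_add,
          Pi.zero_apply] at hk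
        have := mul_eq_zero.mp hk
        simp only [Pi.zero_apply]
        rcases this with h' | h'
        · exact absurd h' (ne_of_gt hp1)
        · exact h'
      have hiU : i ∉ {j : Fin r | (fun k => U k j) ≠ 0} := by
        simp [hUi0]
      have hsub : insert i {j : Fin r | (fun k => U k j) ≠ 0}
          ⊆ {j : Fin r | (fun k => (U + p.1 • p.2) k j) ≠ 0} := by
        intro j hj
        rcases Set.mem_insert_iff.mp hj with rfl | hj
        · exact hcoli
        · exact hp j hj
      have hcard : l20 U + 1 ≤ l20 (U + p.1 • p.2) := by
        have h1 : (insert i {j : Fin r | (fun k => U k j) ≠ 0}).ncard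
            = {j : Fin r | (fun k => U k j) ≠ 0}.ncard + 1 :=
          Set.ncard_insert_of_notMem hiU (Set.toFinite _)
        have h2 := Set.ncard_le_ncard hsub (Set.toFinite _)
        unfold l20
        omega
      have hnum : (1 : ℝ) ≤ (l20 (U + p.1 • p.2) : ℝ) - (l20 U : ℝ) := by
        have := Nat.cast_le (α := ℝ).mpr hcard
        push_cast at this
        linarith
      have hquot : y + 1 ≤ ((l20 (U + p.1 • p.2) : ℝ) - (l20 U : ℝ)) / p.1 := by
        have h1t : max y 1 + 1 ≤ 1 / p.1 := by
          rw [le_div_iff₀ hp1]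
          have hmul : p.1 * (max y 1 + 1) < 1 :=
            (lt_div_iff₀ (by positivity : (0:ℝ) < max y 1 + 1)).mp hpsmall
          nlinarith
        have h2t : 1 / p.1 ≤ ((l20 (U + p.1 • p.2) : ℝ) - (l20 U : ℝ)) / p.1 :=
          div_le_div_of_nonneg_right hnum hp1.le
        calc y + 1 ≤ max y 1 + 1 := by linarith [le_max_left y 1]
          _ ≤ 1 / p.1 := h1t
          _ ≤ _ := h2t
      have : ((y + 1 : ℝ) : EReal) ≤ q p := by
        simp only [hq]
        exact EReal.coe_le_coe_iff.mpr hquot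
      calc (y : EReal) + 1 = ((y + 1 : ℝ) : EReal) := by norm_cast
        _ ≤ q p := this
    have hle : ((y : EReal) + 1) ≤ Filter.liminf q F :=
      Filter.le_liminf_of_le (by isBoundedDefault) hev
    calc (y : EReal) < (y : EReal) + 1 := by
          exact_mod_cast (lt_add_one y : y < y + 1)
      _ ≤ _ := hle
end

section
/- Define G(U,V) = ‖U‖_{2,0} + ‖V‖_{2,0} for (U,V) ∈ ℝ^{n×r} × ℝ^{m×r}. Then for every (U,V) and every direction (S,W) ∈ ℝ^{n×r} × ℝ^{m×r}, the subderivative dG(U,V)(S,W) = 0 if J_S ⊆ J_U and J_W ⊆ J_V, and dG(U,V)(S,W) = +∞ otherwise. -/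
open Filter Topology

section aux

variable {n r : ℕ}

private lemma isOpen_col (j : Fin r) :
    IsOpen {A : Matrix (Fin n) (Fin r) ℝ | (fun k => A k j) ≠ 0} := by
  have hc : Continuous fun A : Matrix (Fin n) (Fin r) ℝ => (fun k => A k j) :=
    continuous_pi fun k => (continuous_apply j).comp (continuous_apply k)
  have : {A : Matrix (Fin n) (Fin r) ℝ | (fun k => A k j) ≠ 0}
      = (fun A : Matrix (Fin n) (Fin r) ℝ => (fun k => A k j)) ⁻¹' {v | v ≠ 0} := rfl
  rw [this]
  exact (isOpen_compl_singleton (x := (0 : Fin n → ℝ))).preimage hc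

private lemma tendsto_phi (U S : Matrix (Fin n) (Fin r) ℝ) :
    Tendsto (fun q : ℝ × Matrix (Fin n) (Fin r) ℝ => U + q.1 • q.2)
      (𝓝[>] (0:ℝ) ×ˢ 𝓝 S) (𝓝 U) := by
  have h : Tendsto (fun q : ℝ × Matrix (Fin n) (Fin r) ℝ => U + q.1 • q.2)
      (𝓝 (0:ℝ) ×ˢ 𝓝 S) (𝓝 (U + (0:ℝ) • S)) := by
    rw [← nhds_prod_eq]
    exact (continuous_const.add (continuous_fst.smul continuous_snd)).tendsto (0, S)
  simp only [zero_smul, add_zero] at h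
  exact h.mono_left (Filter.prod_mono nhdsWithin_le_nhds le_rfl)

private lemma eventually_subset (U S : Matrix (Fin n) (Fin r) ℝ) :
    ∀ᶠ q : ℝ × Matrix (Fin n) (Fin r) ℝ in 𝓝[>] (0:ℝ) ×ˢ 𝓝 S,
      {j : Fin r | (fun k => U k j) ≠ 0}
        ⊆ {j : Fin r | (fun k => (U + q.1 • q.2) k j) ≠ 0} := by
  have h : ∀ᶠ q : ℝ × Matrix (Fin n) (Fin r) ℝ in 𝓝[>] (0:ℝ) ×ˢ 𝓝 S,
      ∀ j : Fin r, (fun k => U k j) ≠ 0 → (fun k => (U + q.1 • q.2) k j) ≠ 0 := by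
    rw [eventually_all]
    intro j
    by_cases hj : (fun k => U k j) ≠ 0
    · have := (tendsto_phi U S).eventually ((isOpen_col j).mem_nhds hj)
      exact this.mono fun q hq _ => hq
    · exact Eventually.of_forall fun q hq => absurd hq hj
  exact h.mono fun q hq j hj => hq j hj

private lemma l20_mono_eventually (U S : Matrix (Fin n) (Fin r) ℝ) :
    ∀ᶠ q : ℝ × Matrix (Fin n) (Fin r) ℝ in 𝓝[>] (0:ℝ) ×ˢ 𝓝 S,
      l20 U ≤ l20 (U + q.1 • q.2) := by
  filter_upwards [eventually_subset U S] with q hq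
  exact Set.ncard_le_ncard hq (Set.toFinite _)

private lemma l20_succ_eventually (U S : Matrix (Fin n) (Fin r) ℝ) (j₀ : Fin r)
    (hS : (fun k => S k j₀) ≠ 0) (hU : (fun k => U k j₀) = 0) :
    ∀ᶠ q : ℝ × Matrix (Fin n) (Fin r) ℝ in 𝓝[>] (0:ℝ) ×ˢ 𝓝 S,
      l20 U + 1 ≤ l20 (U + q.1 • q.2) := by
  have ht : ∀ᶠ q : ℝ × Matrix (Fin n) (Fin r) ℝ in 𝓝[>] (0:ℝ) ×ˢ 𝓝 S, 0 < q.1 :=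
    tendsto_fst.eventually (eventually_mem_nhdsWithin)
  have hs : ∀ᶠ q : ℝ × Matrix (Fin n) (Fin r) ℝ in 𝓝[>] (0:ℝ) ×ˢ 𝓝 S,
      (fun k => q.2 k j₀) ≠ 0 := by
    have : {A : Matrix (Fin n) (Fin r) ℝ | (fun k => A k j₀) ≠ 0} ∈ 𝓝 S :=
      (isOpen_col j₀).mem_nhds hS
    exact tendsto_snd.eventually this
  filter_upwards [eventually_subset U S, ht, hs] with q hsub hq1 hq2
  obtain ⟨k, hk⟩ := Function.ne_iff.mp hq2
  have hcol : (fun k => (U + q.1 • q.2) k j₀) ≠ 0 := by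
    rw [Function.ne_iff]
    refine ⟨k, ?_⟩
    have hu0 : U k j₀ = 0 := congrFun hU k
    simp only [Matrix.add_apply, Matrix.smul_apply, smul_eq_mul, hu0, zero_add, Pi.zero_apply]
    exact mul_ne_zero hq1.ne' (by simpa using hk)
  have hnotmem : j₀ ∉ {j : Fin r | (fun k => U k j) ≠ 0} := by
    simp only [Set.mem_setOf_eq, not_not]
    exact hU
  have hins : insert j₀ {j : Fin r | (fun k => U k j) ≠ 0}
      ⊆ {j : Fin r | (fun k => (U + q.1 • q.2) k j) ≠ 0} := by
    intro j hj
    rcases hj with hj | hj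
    · subst hj; exact hcol
    · exact hsub hj
  calc l20 U + 1 = (insert j₀ {j : Fin r | (fun k => U k j) ≠ 0}).ncard := by
        rw [Set.ncard_insert_of_notMem hnotmem (Set.toFinite _)]; rfl
    _ ≤ l20 (U + q.1 • q.2) := Set.ncard_le_ncard hins (Set.toFinite _)

private lemma l20_eq_eventually (U S : Matrix (Fin n) (Fin r) ℝ)
    (h : ∀ j : Fin r, (fun k => S k j) ≠ 0 → (fun k => U k j) ≠ 0) :
    ∀ᶠ t in 𝓝[>] (0:ℝ), l20 (U + t • S) = l20 U := by
  have hev : ∀ᶠ t in 𝓝[>] (0:ℝ), ∀ j : Fin r,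
      ((fun k => (U + t • S) k j) ≠ 0 ↔ (fun k => U k j) ≠ 0) := by
    rw [eventually_all]
    intro j
    by_cases hj : (fun k => U k j) ≠ 0
    · have htend : Tendsto (fun t : ℝ => U + t • S) (𝓝[>] (0:ℝ)) (𝓝 U) := by
        have : Tendsto (fun t : ℝ => U + t • S) (𝓝 (0:ℝ)) (𝓝 (U + (0:ℝ) • S)) :=
          (continuous_const.add (continuous_id.smul continuous_const)).tendsto 0
        simp only [zero_smul, add_zero] at this
        exact this.mono_left nhdsWithin_le_nhds
      filter_upwards [htend.eventually ((isOpen_col j).mem_nhds hj)] with t ht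
      exact ⟨fun _ => hj, fun _ => ht⟩
    · push_neg at hj
      have hSj : (fun k => S k j) = 0 := by
        by_contra hc
        exact (h j hc) hj
      refine Eventually.of_forall fun t => ?_
      have hz : (fun k => (U + t • S) k j) = 0 := funext fun k => by
        have h1 := congrFun hj k
        have h2 := congrFun hSj k
        simp only [Pi.zero_apply] at h1 h2
        simp [Matrix.add_apply, Matrix.smul_apply, h1, h2]
      rw [hz, hj]
  filter_upwards [hev] with t ht
  unfold l20
  congr 1
  ext j
  exact ht j

end aux

/-- for `G(U,V) = ‖U‖_{2,0} + ‖V‖_{2,0}`, one has `dG(U,V)(S,W) = 0` if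
`J_S ⊆ J_U` and `J_W ⊆ J_V`, and `dG(U,V)(S,W) = +∞` otherwise. -/
theorem subderiv_l20_pair {n m r : ℕ} (U S : Matrix (Fin n) (Fin r) ℝ)
    (V W : Matrix (Fin m) (Fin r) ℝ) :
    (((∀ i : Fin r, (fun k => S k i) ≠ 0 → (fun k => U k i) ≠ 0) ∧
        (∀ i : Fin r, (fun k => W k i) ≠ 0 → (fun k => V k i) ≠ 0)) →
      subderiv (fun p : Matrix (Fin n) (Fin r) ℝ × Matrix (Fin m) (Fin r) ℝ =>
          ((l20 p.1 : ℝ) + (l20 p.2 : ℝ))) (U, V) (S, W) = 0) ∧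
    (¬ ((∀ i : Fin r, (fun k => S k i) ≠ 0 → (fun k => U k i) ≠ 0) ∧
        (∀ i : Fin r, (fun k => W k i) ≠ 0 → (fun k => V k i) ≠ 0)) →
      subderiv (fun p : Matrix (Fin n) (Fin r) ℝ × Matrix (Fin m) (Fin r) ℝ =>
          ((l20 p.1 : ℝ) + (l20 p.2 : ℝ))) (U, V) (S, W) = ⊤) := by
  let M₁ := Matrix (Fin n) (Fin r) ℝ
  let M₂ := Matrix (Fin m) (Fin r) ℝ
  set F : Filter (ℝ × (M₁ × M₂)) := 𝓝[>] (0:ℝ) ×ˢ 𝓝 ((S, W) : M₁ × M₂) with hF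
  -- the function inside the liminf
  set f : ℝ × (M₁ × M₂) → EReal := fun q =>
    (((((l20 (U + q.1 • q.2.1) : ℝ) + (l20 (V + q.1 • q.2.2) : ℝ))
      - ((l20 U : ℝ) + (l20 V : ℝ))) / q.1 : ℝ) : EReal) with hf
  have hsub : subderiv (fun p : M₁ × M₂ => ((l20 p.1 : ℝ) + (l20 p.2 : ℝ))) (U, V) (S, W)
      = Filter.liminf f F := by
    unfold subderiv
    rfl
  -- the projected filters
  have hπ₁ : Tendsto (fun q : ℝ × (M₁ × M₂) => (q.1, q.2.1)) F (𝓝[>] (0:ℝ) ×ˢ 𝓝 S) := by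
    refine Tendsto.prodMk tendsto_fst ?_
    have h2 : Tendsto (Prod.snd : ℝ × (M₁ × M₂) → M₁ × M₂) F (𝓝 ((S, W) : M₁ × M₂)) :=
      tendsto_snd
    exact ((continuous_fst.tendsto ((S, W) : M₁ × M₂)).comp h2)
  have hπ₂ : Tendsto (fun q : ℝ × (M₁ × M₂) => (q.1, q.2.2)) F (𝓝[>] (0:ℝ) ×ˢ 𝓝 W) := by
    refine Tendsto.prodMk tendsto_fst ?_
    exact ((continuous_snd.tendsto ((S, W) : M₁ × M₂)).comp tendsto_snd)
  have ht : ∀ᶠ q : ℝ × (M₁ × M₂) in F, 0 < q.1 :=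
    tendsto_fst.eventually (eventually_mem_nhdsWithin)
  constructor
  · rintro ⟨hUS, hVW⟩
    rw [hsub]
    have e1 : ∀ᶠ q : ℝ × (M₁ × M₂) in F, l20 U ≤ l20 (U + q.1 • q.2.1) :=
      hπ₁.eventually (l20_mono_eventually U S)
    have e2 : ∀ᶠ q : ℝ × (M₁ × M₂) in F, l20 V ≤ l20 (V + q.1 • q.2.2) :=
      hπ₂.eventually (l20_mono_eventually V W)
    have hge : (0 : EReal) ≤ Filter.liminf f F := by
      refine le_liminf_of_le (by isBoundedDefault) ?_
      filter_upwards [e1, e2, ht] with q h1 h2 h3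
      rw [hf]
      simp only
      rw [← EReal.coe_zero, EReal.coe_le_coe_iff]
      apply div_nonneg _ h3.le
      have c1 : (l20 U : ℝ) ≤ (l20 (U + q.1 • q.2.1) : ℝ) := Nat.cast_le.mpr h1
      have c2 : (l20 V : ℝ) ≤ (l20 (V + q.1 • q.2.2) : ℝ) := Nat.cast_le.mpr h2
      linarith
    have hle : Filter.liminf f F ≤ 0 := by
      have hk : Tendsto (fun t : ℝ => (t, ((S, W) : M₁ × M₂))) (𝓝[>] (0:ℝ)) F :=
        Tendsto.prodMk tendsto_id tendsto_const_nhds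
      have hev : ∀ᶠ t in 𝓝[>] (0:ℝ), f (t, ((S, W) : M₁ × M₂)) ≤ 0 := by
        filter_upwards [l20_eq_eventually U S hUS, l20_eq_eventually V W hVW] with t h1 h2
        rw [hf]
        simp only [h1, h2]
        rw [sub_self, zero_div, EReal.coe_zero]
      have hfreq : ∃ᶠ q in F, f q ≤ 0 := hk.frequently hev.frequently
      exact liminf_le_of_frequently_le hfreq
    exact le_antisymm hle hge
  · intro hneg
    rw [hsub]
    rw [not_and_or] at hneg
    -- in either case we get the eventual bound: numerator ≥ 1
    have key : ∀ᶠ q : ℝ × (M₁ × M₂) in F,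
        (1 : ℝ) ≤ ((l20 (U + q.1 • q.2.1) : ℝ) + (l20 (V + q.1 • q.2.2) : ℝ))
          - ((l20 U : ℝ) + (l20 V : ℝ)) := by
      rcases hneg with hA | hB
      · push_neg at hA
        obtain ⟨j₀, hSj, hUj⟩ := hA
        have e1 : ∀ᶠ q : ℝ × (M₁ × M₂) in F, l20 U + 1 ≤ l20 (U + q.1 • q.2.1) :=
          hπ₁.eventually (l20_succ_eventually U S j₀ hSj hUj)
        have e2 : ∀ᶠ q : ℝ × (M₁ × M₂) in F, l20 V ≤ l20 (V + q.1 • q.2.2) :=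
          hπ₂.eventually (l20_mono_eventually V W)
        filter_upwards [e1, e2] with q h1 h2
        have c1 : ((l20 U : ℝ) + 1) ≤ (l20 (U + q.1 • q.2.1) : ℝ) := by
          exact_mod_cast Nat.cast_le.mpr h1
        have c2 : (l20 V : ℝ) ≤ (l20 (V + q.1 • q.2.2) : ℝ) := Nat.cast_le.mpr h2
        linarith
      · push_neg at hB
        obtain ⟨j₀, hWj, hVj⟩ := hB
        have e1 : ∀ᶠ q : ℝ × (M₁ × M₂) in F, l20 V + 1 ≤ l20 (V + q.1 • q.2.2) :=
          hπ₂.eventually (l20_succ_eventually V W j₀ hWj hVj)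
        have e2 : ∀ᶠ q : ℝ × (M₁ × M₂) in F, l20 U ≤ l20 (U + q.1 • q.2.1) :=
          hπ₁.eventually (l20_mono_eventually U S)
        filter_upwards [e1, e2] with q h1 h2
        have c1 : ((l20 V : ℝ) + 1) ≤ (l20 (V + q.1 • q.2.2) : ℝ) := by
          exact_mod_cast Nat.cast_le.mpr h1
        have c2 : (l20 U : ℝ) ≤ (l20 (U + q.1 • q.2.1) : ℝ) := Nat.cast_le.mpr h2
        linarith
    have htop : Tendsto f F (𝓝 ⊤) := by
      rw [EReal.tendsto_nhds_top_iff_real]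
      intro x
      have hpos : (0 : ℝ) < 1 / (|x| + 1) := by positivity
      have hsm0 : ∀ᶠ t in 𝓝[>] (0:ℝ), t < 1 / (|x| + 1) :=
        (eventually_lt_nhds hpos).filter_mono nhdsWithin_le_nhds
      have hsmall : ∀ᶠ q : ℝ × (M₁ × M₂) in F, q.1 < 1 / (|x| + 1) :=
        tendsto_fst.eventually hsm0
      filter_upwards [key, ht, hsmall] with q h1 h2 h3
      rw [hf]
      simp only
      rw [show ((x : ℝ) : EReal) = ((x : ℝ) : EReal) from rfl, EReal.coe_lt_coe_iff]
      rw [lt_div_iff₀ h2]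
      have habs : q.1 * (|x| + 1) < 1 := (lt_div_iff₀ (by positivity)).mp h3
      nlinarith [le_abs_self x, abs_nonneg x]
    exact htop.liminf_eq
end

section
/- Let f : ℝ^{n×m} → ℝ be continuously differentiable, λ > 0, μ > 0. Fix (Ū, V̄) ∈ ℝ^{n×r} × ℝ^{m×r}. Then a pair (G, H) ∈ ℝ^{n×r} × ℝ^{m×r} belongs to the regular (Fréchet) subdifferential of Φ_{λ,μ} at (Ū, V̄) if and only if G_j = ∇f(Ū V̄ᵀ) V̄_j + μ Ū_j for every column index j with Ū_j ≠ 0 and H_j = (∇f(Ū V̄ᵀ))ᵀ Ū_j + μ V̄_j for every column index j with V̄_j ≠ 0 (the remaining columns of G and H are arbitrary). -/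
open Filter Topology Matrix

attribute [local instance] Matrix.frobeniusSeminormedAddCommGroup
  Matrix.frobeniusNormedAddCommGroup Matrix.frobeniusNormedSpace

/-- The Frobenius (trace) inner product `⟨A,B⟩ = trace(AᵀB) = ∑ᵢⱼ Aᵢⱼ Bᵢⱼ` on matrices. -/
noncomputable def frobInner {α β : Type*} [Fintype α] [Fintype β] (A B : Matrix α β ℝ) : ℝ :=
  ∑ i, ∑ j, A i j * B i j

section helpers
variable {α β : Type*} [Fintype α] [Fintype β]

lemma frobInner_self_nonneg (A : Matrix α β ℝ) : 0 ≤ frobInner A A :=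
  Finset.sum_nonneg fun _ _ => Finset.sum_nonneg fun _ _ => mul_self_nonneg _

lemma norm_eq_sqrt_frobInner (A : Matrix α β ℝ) : ‖A‖ = Real.sqrt (frobInner A A) := by
  rw [Matrix.frobenius_norm_def, Real.sqrt_eq_rpow]
  congr 1
  simp [frobInner, Real.norm_eq_abs]
  refine Finset.sum_congr rfl fun i _ => Finset.sum_congr rfl fun j _ => ?_
  ring

lemma frobInner_self_eq_norm_sq (A : Matrix α β ℝ) : frobInner A A = ‖A‖ ^ 2 := by
  rw [norm_eq_sqrt_frobInner, Real.sq_sqrt (frobInner_self_nonneg A)]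

lemma entry_abs_le_sqrt (A : Matrix α β ℝ) (i : α) (j : β) :
    |A i j| ≤ Real.sqrt (frobInner A A) := by
  rw [← Real.sqrt_sq_eq_abs]
  apply Real.sqrt_le_sqrt
  calc A i j ^ 2 ≤ ∑ j', A i j' ^ 2 :=
        Finset.single_le_sum (f := fun j' => A i j' ^ 2) (fun _ _ => sq_nonneg _) (Finset.mem_univ j)
    _ ≤ frobInner A A := by
        simpa [frobInner, sq] using Finset.single_le_sum
          (f := fun i' => ∑ j', A i' j' * A i' j')
          (fun _ _ => Finset.sum_nonneg fun _ _ => mul_self_nonneg _) (Finset.mem_univ i)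

lemma abs_frobInner_le (W D : Matrix α β ℝ) (c : ℝ) (hc : ∀ i j, |D i j| ≤ c) :
    |frobInner W D| ≤ (∑ i, ∑ j, |W i j|) * c := by
  calc |frobInner W D| ≤ ∑ i, ∑ j, |W i j * D i j| := by
        refine (Finset.abs_sum_le_sum_abs _ _).trans (Finset.sum_le_sum fun i _ => ?_)
        exact Finset.abs_sum_le_sum_abs _ _
    _ ≤ ∑ i, ∑ j, |W i j| * c := by
        refine Finset.sum_le_sum fun i _ => Finset.sum_le_sum fun j _ => ?_
        rw [abs_mul]
        exact mul_le_mul_of_nonneg_left (hc i j) (abs_nonneg _)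
    _ = (∑ i, ∑ j, |W i j|) * c := by rw [Finset.sum_mul]; simp [Finset.sum_mul]

end helpers

section more
variable {α β : Type*} [Fintype α] [Fintype β]

lemma frobInner_add_left (A B C : Matrix α β ℝ) :
    frobInner (A + B) C = frobInner A C + frobInner B C := by
  simp [frobInner, add_mul, Finset.sum_add_distrib]

lemma frobInner_add_right (A B C : Matrix α β ℝ) :
    frobInner A (B + C) = frobInner A B + frobInner A C := by
  simp [frobInner, mul_add, Finset.sum_add_distrib]

lemma frobInner_smul_left (t : ℝ) (A B : Matrix α β ℝ) :
    frobInner (t • A) B = t * frobInner A B := by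
  simp [frobInner, Finset.mul_sum, Matrix.smul_apply, smul_eq_mul, mul_assoc]

lemma frobInner_smul_right (t : ℝ) (A B : Matrix α β ℝ) :
    frobInner A (t • B) = t * frobInner A B := by
  simp [frobInner, Finset.mul_sum, Matrix.smul_apply, smul_eq_mul]
  refine Finset.sum_congr rfl fun i _ => Finset.sum_congr rfl fun j _ => by ring

lemma frobInner_zero_right (A B : Matrix α β ℝ) (h : B = 0) : frobInner A B = 0 := by
  simp [frobInner, h]

lemma l20_eq_add {A A' : Matrix α β ℝ}
    (hsub : ∀ j, (fun i => A i j) ≠ 0 → (fun i => A' i j) ≠ 0) :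
    (l20 A' : ℝ) = (l20 A : ℝ) +
      ({j : β | (fun i => A i j) = 0 ∧ (fun i => A' i j) ≠ 0}.ncard : ℝ) := by
  have hset : {j : β | (fun i => A' i j) ≠ 0} =
      {j : β | (fun i => A i j) ≠ 0} ∪ {j : β | (fun i => A i j) = 0 ∧ (fun i => A' i j) ≠ 0} := by
    ext j
    simp only [Set.mem_setOf_eq, Set.mem_union]
    by_cases h : (fun i => A i j) = 0
    · simp [h]
    · simp [h, hsub j h]
  have hdisj : Disjoint {j : β | (fun i => A i j) ≠ 0}
      {j : β | (fun i => A i j) = 0 ∧ (fun i => A' i j) ≠ 0} := by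
    rw [Set.disjoint_left]; rintro j hj ⟨h1, h2⟩; exact hj h1
  rw [l20, l20, hset, Set.ncard_union_eq hdisj (Set.toFinite _) (Set.toFinite _)]
  push_cast; ring

lemma frob_mul_right1 {n m r : ℕ} (C : Matrix (Fin n) (Fin m) ℝ) (A : Matrix (Fin n) (Fin r) ℝ)
    (B : Matrix (Fin m) (Fin r) ℝ) : frobInner C (A * Bᵀ) = frobInner (C * B) A := by
  simp only [frobInner, Matrix.mul_apply, Matrix.transpose_apply, Finset.mul_sum, Finset.sum_mul]
  refine Finset.sum_congr rfl fun i _ => ?_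
  rw [Finset.sum_comm]
  exact Finset.sum_congr rfl fun j _ => Finset.sum_congr rfl fun k _ => by ring

lemma frob_mul_right2 {n m r : ℕ} (C : Matrix (Fin n) (Fin m) ℝ) (A : Matrix (Fin n) (Fin r) ℝ)
    (B : Matrix (Fin m) (Fin r) ℝ) : frobInner C (A * Bᵀ) = frobInner (Cᵀ * A) B := by
  simp only [frobInner, Matrix.mul_apply, Matrix.transpose_apply, Finset.mul_sum, Finset.sum_mul]
  rw [Finset.sum_comm]
  refine Finset.sum_congr rfl fun k _ => ?_
  rw [Finset.sum_comm]
  exact Finset.sum_congr rfl fun j _ => Finset.sum_congr rfl fun i _ => by ring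

end more

lemma frobInner_stdBasis {α β : Type*} [Fintype α] [Fintype β] [DecidableEq α] [DecidableEq β]
    (M : Matrix α β ℝ) (i : α) (j : β) :
    frobInner M (Matrix.single i j 1) = M i j := by
  simp [frobInner, Matrix.single, Matrix.of_apply, mul_ite, mul_one, mul_zero,
    ite_and, Finset.sum_ite_eq, Finset.sum_ite_eq']

lemma stdBasis_apply_same {α β : Type*} [Fintype α] [Fintype β] [DecidableEq α] [DecidableEq β]
    (i : α) (j : β) : Matrix.single i j (1:ℝ) i j = 1 := by
  simp [Matrix.single]

lemma stdBasis_col_ne {α β : Type*} [Fintype α] [Fintype β] [DecidableEq α] [DecidableEq β]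
    (i i' : α) (j j' : β) (h : j' ≠ j) : Matrix.single i j (1:ℝ) i' j' = 0 := by
  simp [Matrix.single, Ne.symm h]

lemma stdBasis_abs_le {α β : Type*} [Fintype α] [Fintype β] [DecidableEq α] [DecidableEq β]
    (i i' : α) (j j' : β) : |Matrix.single i j (1:ℝ) i' j'| ≤ 1 := by
  simp only [Matrix.single, Matrix.of_apply]
  split <;> simp

lemma l20_congr {α β : Type*} [Fintype α] [Fintype β] {A B : Matrix α β ℝ}
    (h : ∀ j, ((fun i => A i j) ≠ 0) ↔ ((fun i => B i j) ≠ 0)) : l20 A = l20 B := by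
  unfold l20
  congr 1
  ext j
  simpa using h j

lemma liminf_map_aux {α β : Type*} (u : β → EReal) (φ : α → β) (F : Filter α) :
    Filter.liminf u (Filter.map φ F) = Filter.liminf (u ∘ φ) F := by
  show Filter.limsInf (Filter.map u (Filter.map φ F)) = Filter.limsInf (Filter.map (u ∘ φ) F)
  rw [Filter.map_map]

lemma frobInner_comm {α β : Type*} [Fintype α] [Fintype β] (A B : Matrix α β ℝ) :
    frobInner A B = frobInner B A := by
  simp [frobInner, mul_comm]

lemma quadratic_littleO {E F : Type*} [NormedAddCommGroup E] [NormedAddCommGroup F]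
    (g : E → F) (hb : ∀ h, ‖g h‖ ≤ ‖h‖ * ‖h‖) :
    g =o[𝓝 0] (fun h : E => h) := by
  rw [Asymptotics.isLittleO_iff]
  intro c hc
  have hball : ∀ᶠ h : E in 𝓝 0, ‖h‖ ≤ c := by
    filter_upwards [Metric.closedBall_mem_nhds (0 : E) hc] with h hh
    simpa [dist_zero_right] using hh
  filter_upwards [hball] with h hh
  calc ‖g h‖ ≤ ‖h‖ * ‖h‖ := hb h
    _ ≤ c * ‖h‖ := mul_le_mul_of_nonneg_right hh (norm_nonneg _)

lemma hasFDerivAt_frob_self {α β : Type*} [Fintype α] [Fintype β] (U : Matrix α β ℝ) :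
    ∃ D : Matrix α β ℝ →L[ℝ] ℝ,
      HasFDerivAt (fun A : Matrix α β ℝ => frobInner A A) D U ∧
      ∀ B, D B = 2 * frobInner U B := by
  set L : Matrix α β ℝ →ₗ[ℝ] ℝ :=
    { toFun := fun B : Matrix α β ℝ => 2 * frobInner U B
      map_add' := fun a b => by
        show 2 * frobInner U (a + b) = 2 * frobInner U a + 2 * frobInner U b
        rw [frobInner_add_right]; ring
      map_smul' := fun c a => by
        show 2 * frobInner U (c • a) = c • (2 * frobInner U a)
        rw [frobInner_smul_right, smul_eq_mul]; ring } with hL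
  have happly : ∀ B, L.toContinuousLinearMap B = 2 * frobInner U B := fun B => rfl
  refine ⟨L.toContinuousLinearMap, ?_, happly⟩
  refine hasFDerivAt_iff_isLittleO_nhds_zero.mpr ?_
  have heq : (fun h : Matrix α β ℝ => frobInner (U + h) (U + h) - frobInner U U -
      L.toContinuousLinearMap h) = fun h => frobInner h h := by
    funext h
    rw [happly, frobInner_add_left, frobInner_add_right, frobInner_add_right,
      frobInner_comm h U]
    ring
  refine (Asymptotics.isLittleO_congr (Filter.Eventually.of_forall (congrFun heq))
    (Filter.Eventually.of_forall fun _ => rfl)).mpr ?_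
  refine quadratic_littleO _ fun h => ?_
  rw [Real.norm_eq_abs, abs_of_nonneg (frobInner_self_nonneg h),
    ← Real.sq_sqrt (frobInner_self_nonneg h), ← norm_eq_sqrt_frobInner]
  rw [sq]

lemma hasFDeriv_gsm {n m r : ℕ} (f : Matrix (Fin n) (Fin m) ℝ → ℝ)
    (f' : Matrix (Fin n) (Fin m) ℝ → Matrix (Fin n) (Fin m) ℝ)
    (hdiff : Differentiable ℝ f)
    (hgrad : ∀ X H, fderiv ℝ f X H = frobInner (f' X) H)
    (mu : ℝ) (Ubar : Matrix (Fin n) (Fin r) ℝ) (Vbar : Matrix (Fin m) (Fin r) ℝ) :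
    ∃ D : (Matrix (Fin n) (Fin r) ℝ × Matrix (Fin m) (Fin r) ℝ) →L[ℝ] ℝ,
      HasFDerivAt (fun p : Matrix (Fin n) (Fin r) ℝ × Matrix (Fin m) (Fin r) ℝ =>
        f (p.1 * p.2ᵀ) + mu / 2 * (frobInner p.1 p.1 + frobInner p.2 p.2)) D (Ubar, Vbar) ∧
      ∀ d : Matrix (Fin n) (Fin r) ℝ × Matrix (Fin m) (Fin r) ℝ,
        D d = frobInner (f' (Ubar * Vbarᵀ) * Vbar + mu • Ubar) d.1 +
          frobInner ((f' (Ubar * Vbarᵀ))ᵀ * Ubar + mu • Vbar) d.2 := by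
  set X := Ubar * Vbarᵀ with hX
  set LbL : (Matrix (Fin n) (Fin r) ℝ × Matrix (Fin m) (Fin r) ℝ) →ₗ[ℝ]
      Matrix (Fin n) (Fin m) ℝ :=
    { toFun := fun d => d.1 * Vbarᵀ + Ubar * d.2ᵀ
      map_add' := fun a b => by
        simp only [Prod.fst_add, Prod.snd_add, Matrix.transpose_add, Matrix.add_mul,
          Matrix.mul_add]
        abel
      map_smul' := fun c a => by
        simp only [Prod.smul_fst, Prod.smul_snd, Matrix.transpose_smul, RingHom.id_apply,
          smul_add, Matrix.smul_mul, Matrix.mul_smul] } with hLbL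
  have hb : HasFDerivAt (fun p : Matrix (Fin n) (Fin r) ℝ × Matrix (Fin m) (Fin r) ℝ =>
      p.1 * p.2ᵀ) LbL.toContinuousLinearMap (Ubar, Vbar) := by
    refine hasFDerivAt_iff_isLittleO_nhds_zero.mpr ?_
    have heq : (fun h : Matrix (Fin n) (Fin r) ℝ × Matrix (Fin m) (Fin r) ℝ =>
        ((Ubar, Vbar) + h).1 * ((Ubar, Vbar) + h).2ᵀ - Ubar * Vbarᵀ -
          LbL.toContinuousLinearMap h) = fun h => h.1 * h.2ᵀ := by
      funext h
      simp only [LinearMap.coe_toContinuousLinearMap', hLbL, LinearMap.coe_mk, AddHom.coe_mk,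
        Prod.fst_add, Prod.snd_add, Matrix.transpose_add, Matrix.add_mul, Matrix.mul_add]
      abel
    refine (Asymptotics.isLittleO_congr (Filter.Eventually.of_forall (congrFun heq))
      (Filter.Eventually.of_forall fun _ => rfl)).mpr ?_
    refine quadratic_littleO _ fun h => ?_
    calc ‖h.1 * h.2ᵀ‖ ≤ ‖h.1‖ * ‖h.2ᵀ‖ := Matrix.frobenius_norm_mul _ _
      _ = ‖h.1‖ * ‖h.2‖ := by rw [Matrix.frobenius_norm_transpose]
      _ ≤ ‖h‖ * ‖h‖ := by
          exact mul_le_mul (norm_fst_le h) (norm_snd_le h) (norm_nonneg _) (norm_nonneg _)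
  have hf : HasFDerivAt f (fderiv ℝ f X) X := (hdiff X).hasFDerivAt
  have hfb : HasFDerivAt (fun p : Matrix (Fin n) (Fin r) ℝ × Matrix (Fin m) (Fin r) ℝ =>
      f (p.1 * p.2ᵀ)) ((fderiv ℝ f X).comp LbL.toContinuousLinearMap) (Ubar, Vbar) :=
    hf.comp (Ubar, Vbar) hb
  have hfst : HasFDerivAt (fun p : Matrix (Fin n) (Fin r) ℝ × Matrix (Fin m) (Fin r) ℝ => p.1)
      (ContinuousLinearMap.fst ℝ _ _) (Ubar, Vbar) := hasFDerivAt_fst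
  have hsnd : HasFDerivAt (fun p : Matrix (Fin n) (Fin r) ℝ × Matrix (Fin m) (Fin r) ℝ => p.2)
      (ContinuousLinearMap.snd ℝ _ _) (Ubar, Vbar) := hasFDerivAt_snd
  obtain ⟨DA, hDA, hDAap⟩ := hasFDerivAt_frob_self Ubar
  obtain ⟨DB, hDB, hDBap⟩ := hasFDerivAt_frob_self Vbar
  have hA := hDA.comp (Ubar, Vbar) hfst
  have hB := hDB.comp (Ubar, Vbar) hsnd
  have htot := hfb.add (((hA.add hB)).const_mul (mu / 2))
  refine ⟨_, htot, fun d => ?_⟩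
  show fderiv ℝ f X (LbL d) + mu / 2 * (DA d.1 + DB d.2) = _
  rw [hgrad, hDAap, hDBap]
  rw [show LbL d = d.1 * Vbarᵀ + Ubar * d.2ᵀ from rfl]
  rw [frobInner_add_right, frob_mul_right1, frob_mul_right2,
    frobInner_add_left, frobInner_add_left, frobInner_smul_left, frobInner_smul_left]
  ring

/-- `Φ_{λ,μ}(U,V) = f(UVᵀ) + (μ/2)(‖U‖_F² + ‖V‖_F²) + λ(‖U‖_{2,0} + ‖V‖_{2,0})`. -/
noncomputable def Phi {n m r : ℕ} (f : Matrix (Fin n) (Fin m) ℝ → ℝ) (lam mu : ℝ)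
    (U : Matrix (Fin n) (Fin r) ℝ) (V : Matrix (Fin m) (Fin r) ℝ) : ℝ :=
  f (U * Vᵀ) + mu / 2 * (frobInner U U + frobInner V V) + lam * ((l20 U : ℝ) + (l20 V : ℝ))

/-- The regular (Fréchet) subdifferential of a function on a product of two matrix spaces,
with respect to the Frobenius inner product and norm of the pair. -/
noncomputable def regularSubdiffP {n m r : ℕ}
    (h : Matrix (Fin n) (Fin r) ℝ × Matrix (Fin m) (Fin r) ℝ → ℝ)
    (x : Matrix (Fin n) (Fin r) ℝ × Matrix (Fin m) (Fin r) ℝ) :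
    Set (Matrix (Fin n) (Fin r) ℝ × Matrix (Fin m) (Fin r) ℝ) :=
  {v | (0 : EReal) ≤ Filter.liminf
      (fun x' => (((h x' - h x - (frobInner v.1 (x'.1 - x.1) + frobInner v.2 (x'.2 - x.2))) /
          Real.sqrt (frobInner (x'.1 - x.1) (x'.1 - x.1) +
            frobInner (x'.2 - x.2) (x'.2 - x.2)) : ℝ) : EReal))
      (𝓝[≠] x)}

set_option maxHeartbeats 2000000 in
/-- `(G,H) ∈ ∂̂Φ_{λ,μ}(Ū,V̄)` iff `G_j = ∇f(ŪV̄ᵀ)V̄_j + μŪ_j` for every nonzero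
column index `j` of `Ū` and `H_j = (∇f(ŪV̄ᵀ))ᵀŪ_j + μV̄_j` for every nonzero column index
`j` of `V̄` (remaining columns arbitrary). -/
theorem mem_regularSubdiff_Phi_iff {n m r : ℕ}
    (f : Matrix (Fin n) (Fin m) ℝ → ℝ) (f' : Matrix (Fin n) (Fin m) ℝ → Matrix (Fin n) (Fin m) ℝ)
    (hdiff : Differentiable ℝ f)
    (hgrad : ∀ X H, fderiv ℝ f X H = frobInner (f' X) H)
    (hcont : Continuous f')
    (lam mu : ℝ) (hlam : 0 < lam) (hmu : 0 < mu)
    (Ubar : Matrix (Fin n) (Fin r) ℝ) (Vbar : Matrix (Fin m) (Fin r) ℝ)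
    (G : Matrix (Fin n) (Fin r) ℝ) (H : Matrix (Fin m) (Fin r) ℝ) :
    (G, H) ∈ regularSubdiffP (fun p => Phi f lam mu p.1 p.2) (Ubar, Vbar) ↔
      ((∀ j : Fin r, (fun i => Ubar i j) ≠ 0 →
          ∀ i, G i j = (f' (Ubar * Vbarᵀ) * Vbar) i j + mu * Ubar i j) ∧
        (∀ j : Fin r, (fun i => Vbar i j) ≠ 0 →
          ∀ i, H i j = ((f' (Ubar * Vbarᵀ))ᵀ * Ubar) i j + mu * Vbar i j)) := by
  obtain ⟨D, hD, hDap⟩ := hasFDeriv_gsm f f' hdiff hgrad mu Ubar Vbar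
  set X := Ubar * Vbarᵀ with hX
  set gs : Matrix (Fin n) (Fin r) ℝ × Matrix (Fin m) (Fin r) ℝ → ℝ :=
    fun p => f (p.1 * p.2ᵀ) + mu / 2 * (frobInner p.1 p.1 + frobInner p.2 p.2) with hgs
  set P : Matrix (Fin n) (Fin r) ℝ := f' X * Vbar + mu • Ubar with hP
  set Q : Matrix (Fin m) (Fin r) ℝ := (f' X)ᵀ * Ubar + mu • Vbar with hQ
  have hPap : ∀ i j, P i j = (f' X * Vbar) i j + mu * Ubar i j := by
    intro i j; simp [hP, Matrix.add_apply, Matrix.smul_apply, smul_eq_mul]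
  have hQap : ∀ i j, Q i j = ((f' X)ᵀ * Ubar) i j + mu * Vbar i j := by
    intro i j; simp [hQ, Matrix.add_apply, Matrix.smul_apply, smul_eq_mul]
  have hPhi : ∀ U V, Phi f lam mu U V = gs (U, V) + lam * ((l20 U : ℝ) + (l20 V : ℝ)) := by
    intro U V; simp only [Phi, hgs]
  constructor
  · intro hmem
    set q : Matrix (Fin n) (Fin r) ℝ × Matrix (Fin m) (Fin r) ℝ → EReal := fun x' =>
      (((Phi f lam mu x'.1 x'.2 - Phi f lam mu Ubar Vbar -
        (frobInner G (x'.1 - Ubar) + frobInner H (x'.2 - Vbar))) /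
        Real.sqrt (frobInner (x'.1 - Ubar) (x'.1 - Ubar) +
          frobInner (x'.2 - Vbar) (x'.2 - Vbar)) : ℝ) : EReal) with hqdef
    have hmem' : (0 : EReal) ≤ Filter.liminf q
        (𝓝[≠] ((Ubar, Vbar) : Matrix (Fin n) (Fin r) ℝ × Matrix (Fin m) (Fin r) ℝ)) := hmem
    have key : ∀ w : Matrix (Fin n) (Fin r) ℝ × Matrix (Fin m) (Fin r) ℝ,
        w ≠ 0 → frobInner w.1 w.1 + frobInner w.2 w.2 = 1 →
        (∀ᶠ t : ℝ in 𝓝[>] 0,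
          l20 (Ubar + t • w.1) = l20 Ubar ∧ l20 (Vbar + t • w.2) = l20 Vbar) →
        0 ≤ D w - (frobInner G w.1 + frobInner H w.2) := by
      intro w hw hnorm hl20
      set φ : ℝ → Matrix (Fin n) (Fin r) ℝ × Matrix (Fin m) (Fin r) ℝ :=
        fun t => (Ubar + t • w.1, Vbar + t • w.2) with hφ
      have hφ0 : φ 0 = (Ubar, Vbar) := by simp [hφ]
      have hφcont : Continuous φ := by
        apply Continuous.prodMk
        · exact continuous_const.add (continuous_id.smul continuous_const)
        · exact continuous_const.add (continuous_id.smul continuous_const)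
      have hφtend : Tendsto φ (𝓝 0) (𝓝 (Ubar, Vbar)) := by
        have h := hφcont.tendsto 0
        rwa [hφ0] at h
      have hφne : ∀ᶠ t : ℝ in 𝓝[>] 0, φ t ∈ ({((Ubar, Vbar) : Matrix (Fin n) (Fin r) ℝ ×
          Matrix (Fin m) (Fin r) ℝ)}ᶜ : Set _) := by
        filter_upwards [self_mem_nhdsWithin] with t ht
        intro hEq
        rw [Set.mem_singleton_iff] at hEq
        have ht0 : t ≠ 0 := ne_of_gt ht
        apply hw
        have h1 : Ubar + t • w.1 = Ubar := congrArg Prod.fst hEq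
        have h2 : Vbar + t • w.2 = Vbar := congrArg Prod.snd hEq
        have e1 : t • w.1 = 0 := by
          have h3 := h1
          rwa [add_eq_left] at h3
        have e2 : t • w.2 = 0 := by
          have h3 := h2
          rwa [add_eq_left] at h3
        have f1 : w.1 = 0 := (smul_eq_zero.mp e1).resolve_left ht0
        have f2 : w.2 = 0 := (smul_eq_zero.mp e2).resolve_left ht0
        exact Prod.ext_iff.mpr ⟨f1, f2⟩
      have hmap : Tendsto φ (𝓝[>] (0:ℝ)) (𝓝[≠] ((Ubar, Vbar) : Matrix (Fin n) (Fin r) ℝ ×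
          Matrix (Fin m) (Fin r) ℝ)) :=
        tendsto_nhdsWithin_of_tendsto_nhds_of_eventually_within _
          (hφtend.mono_left nhdsWithin_le_nhds) hφne
      have hmono : Filter.liminf q (𝓝[≠] ((Ubar, Vbar) : Matrix (Fin n) (Fin r) ℝ ×
          Matrix (Fin m) (Fin r) ℝ)) ≤ Filter.liminf q (Filter.map φ (𝓝[>] (0:ℝ))) :=
        Filter.liminf_le_liminf_of_le hmap
      have hmapeq : Filter.liminf q (Filter.map φ (𝓝[>] (0:ℝ))) =
          Filter.liminf (q ∘ φ) (𝓝[>] (0:ℝ)) :=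
        liminf_map_aux q φ _
      set K : ℝ := frobInner G w.1 + frobInner H w.2 with hK
      have hline1 : HasDerivAt (fun t : ℝ => Ubar + t • w.1) w.1 0 := by
        have h := ((hasDerivAt_id (0:ℝ)).smul_const w.1).const_add Ubar
        exact h.congr_deriv (one_smul ℝ _)
      have hline2 : HasDerivAt (fun t : ℝ => Vbar + t • w.2) w.2 0 := by
        have h := ((hasDerivAt_id (0:ℝ)).smul_const w.2).const_add Vbar
        exact h.congr_deriv (one_smul ℝ _)
      have hline : HasDerivAt φ w 0 := by
        have h := hline1.prodMk hline2
        rw [hφ]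
        exact h
      have hcomp : HasDerivAt (gs ∘ φ) (D w) 0 := by
        have hD' : HasFDerivAt gs D (φ 0) := by rwa [hφ0]
        exact hD'.comp_hasDerivAt 0 hline
      have hslope : Tendsto (fun t : ℝ => (gs (φ t) - gs (Ubar, Vbar)) / t) (𝓝[>] 0)
          (𝓝 (D w)) := by
        rw [hasDerivAt_iff_tendsto_slope] at hcomp
        have h2 : Tendsto (slope (gs ∘ φ) 0) (𝓝[>] (0:ℝ)) (𝓝 (D w)) :=
          hcomp.mono_left (nhdsWithin_mono _ fun t ht => ne_of_gt ht)
        refine h2.congr fun t => ?_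
        rw [slope_def_field, Function.comp_apply, Function.comp_apply, hφ0, sub_zero]
      have hψ : Tendsto (fun t : ℝ => (gs (φ t) - gs (Ubar, Vbar)) / t - K) (𝓝[>] 0)
          (𝓝 (D w - K)) := hslope.sub_const K
      have hqφ : ∀ᶠ t : ℝ in 𝓝[>] 0, (q ∘ φ) t =
          (((gs (φ t) - gs (Ubar, Vbar)) / t - K : ℝ) : EReal) := by
        filter_upwards [hl20, self_mem_nhdsWithin] with t hl ht
        have ht0 : (0:ℝ) < t := ht
        have hsub1 : (φ t).1 - Ubar = t • w.1 := by simp [hφ]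
        have hsub2 : (φ t).2 - Vbar = t • w.2 := by simp [hφ]
        have hfrobsum : frobInner (t • w.1) (t • w.1) + frobInner (t • w.2) (t • w.2)
            = t ^ 2 := by
          rw [frobInner_smul_left, frobInner_smul_right, frobInner_smul_left,
            frobInner_smul_right]
          nlinarith [hnorm]
        have hsqrt : Real.sqrt (frobInner (t • w.1) (t • w.1) +
            frobInner (t • w.2) (t • w.2)) = t := by
          rw [hfrobsum, Real.sqrt_sq ht0.le]
        have hphi1 : Phi f lam mu (φ t).1 (φ t).2 =
            gs (φ t) + lam * ((l20 Ubar : ℝ) + (l20 Vbar : ℝ)) := by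
          have e1 : (φ t).1 = Ubar + t • w.1 := by simp [hφ]
          have e2 : (φ t).2 = Vbar + t • w.2 := by simp [hφ]
          rw [e1, e2, hPhi, hl.1, hl.2]
        have hfg : frobInner G (t • w.1) = t * frobInner G w.1 := frobInner_smul_right t G w.1
        have hfh : frobInner H (t • w.2) = t * frobInner H w.2 := frobInner_smul_right t H w.2
        show q (φ t) = _
        rw [hqdef]
        simp only []
        rw [hsub1, hsub2, hsqrt, hphi1, hPhi Ubar Vbar, hfg, hfh]
        congr 1
        rw [hK]
        field_simp
        ring
      have hlim : Tendsto (q ∘ φ) (𝓝[>] (0:ℝ)) (𝓝 ((D w - K : ℝ) : EReal)) :=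
        Filter.Tendsto.congr' (Filter.EventuallyEq.symm hqφ) (EReal.tendsto_coe.mpr hψ)
      have hliminf_eq : Filter.liminf (q ∘ φ) (𝓝[>] (0:ℝ)) = ((D w - K : ℝ) : EReal) :=
        hlim.liminf_eq
      have hfin : (0 : EReal) ≤ ((D w - K : ℝ) : EReal) := by
        rw [← hliminf_eq, ← hmapeq]
        exact le_trans hmem' hmono
      exact_mod_cast hfin
    constructor
    · intro j hj i
      have hstep : ∀ c : ℝ, c * c = 1 → |c| ≤ 1 → 0 ≤ c * (P i j - G i j) := by
        intro c hc hcabs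
        have hc0 : c ≠ 0 := by
          intro h; rw [h] at hc; norm_num at hc
        set e : Matrix (Fin n) (Fin r) ℝ := Matrix.single i j (1:ℝ) with he
        have hee : frobInner e e = 1 := by
          rw [he, frobInner_stdBasis, stdBasis_apply_same]
        set w : Matrix (Fin n) (Fin r) ℝ × Matrix (Fin m) (Fin r) ℝ := (c • e, 0) with hwdef
        have hw1e : w.1 = c • e := by rw [hwdef]
        have hw2e : w.2 = (0 : Matrix (Fin m) (Fin r) ℝ) := by rw [hwdef]
        have hwne : w ≠ 0 := by
          intro h
          have h1 : w.1 = 0 := by rw [h]; rfl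
          rw [hw1e] at h1
          have h2 : (c • e) i j = 0 := by rw [h1]; rfl
          rw [Matrix.smul_apply, he, stdBasis_apply_same, smul_eq_mul, mul_one] at h2
          exact hc0 h2
        have hwnorm : frobInner w.1 w.1 + frobInner w.2 w.2 = 1 := by
          rw [hw1e, hw2e, frobInner_smul_left, frobInner_smul_right, hee,
            frobInner_zero_right _ _ rfl]
          nlinarith [hc]
        have hl20 : ∀ᶠ t : ℝ in 𝓝[>] 0,
            l20 (Ubar + t • w.1) = l20 Ubar ∧ l20 (Vbar + t • w.2) = l20 Vbar := by
          obtain ⟨i0, hi0⟩ := Function.ne_iff.mp hj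
          have habs : (0:ℝ) < |Ubar i0 j| := abs_pos.mpr hi0
          have hIoo : Set.Ioo (0:ℝ) |Ubar i0 j| ∈ 𝓝[>] (0:ℝ) :=
            Ioo_mem_nhdsGT_of_mem ⟨le_refl 0, habs⟩
          filter_upwards [hIoo] with t ht
          constructor
          · apply l20_congr
            intro j'
            by_cases hjj : j' = j
            · subst hjj
              have hcol : (fun i' => (Ubar + t • w.1) i' j') ≠ 0 := by
                intro h0
                have hval : (Ubar + t • w.1) i0 j' = 0 := congrFun h0 i0
                rw [hw1e, Matrix.add_apply, Matrix.smul_apply, Matrix.smul_apply,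
                  smul_eq_mul, smul_eq_mul] at hval
                have hb : |t * (c * e i0 j')| ≤ t := by
                  rw [abs_mul, abs_mul, abs_of_pos ht.1]
                  have hbe := stdBasis_abs_le i i0 j' j'
                  rw [← he] at hbe
                  have h1 : |c| * |e i0 j'| ≤ 1 :=
                    mul_le_one₀ hcabs (abs_nonneg _) hbe
                  nlinarith [ht.1, h1]
                have : Ubar i0 j' = -(t * (c * e i0 j')) := by linarith [hval]
                rw [this, abs_neg] at ht
                have := ht.2
                linarith [hb]
              exact iff_of_true hcol hj
            · have hcols : (fun i' => (Ubar + t • w.1) i' j') = (fun i' => Ubar i' j') := by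
                funext i'
                rw [hw1e, Matrix.add_apply, Matrix.smul_apply, Matrix.smul_apply,
                  smul_eq_mul, smul_eq_mul, he, stdBasis_col_ne i i' j j' hjj]
                ring
              rw [hcols]
          · simp [hw2e]
        have hkey := key w hwne hwnorm hl20
        rw [hDap] at hkey
        rw [hw1e, hw2e, frobInner_smul_right, frobInner_smul_right,
          frobInner_zero_right _ _ rfl, frobInner_zero_right _ _ rfl, he,
          frobInner_stdBasis, frobInner_stdBasis] at hkey
        nlinarith [hkey]
      have h1 := hstep 1 (by norm_num) (by norm_num)
      have h2 := hstep (-1) (by norm_num) (by norm_num)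
      have hPG : G i j = P i j := by nlinarith [h1, h2]
      rw [hPG, hPap]
    · intro j hj i
      have hstep : ∀ c : ℝ, c * c = 1 → |c| ≤ 1 → 0 ≤ c * (Q i j - H i j) := by
        intro c hc hcabs
        have hc0 : c ≠ 0 := by
          intro h; rw [h] at hc; norm_num at hc
        set e : Matrix (Fin m) (Fin r) ℝ := Matrix.single i j (1:ℝ) with he
        have hee : frobInner e e = 1 := by
          rw [he, frobInner_stdBasis, stdBasis_apply_same]
        set w : Matrix (Fin n) (Fin r) ℝ × Matrix (Fin m) (Fin r) ℝ := (0, c • e) with hwdef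
        have hw1e : w.1 = (0 : Matrix (Fin n) (Fin r) ℝ) := by rw [hwdef]
        have hw2e : w.2 = c • e := by rw [hwdef]
        have hwne : w ≠ 0 := by
          intro h
          have h1 : w.2 = 0 := by rw [h]; rfl
          rw [hw2e] at h1
          have h2 : (c • e) i j = 0 := by rw [h1]; rfl
          rw [Matrix.smul_apply, he, stdBasis_apply_same, smul_eq_mul, mul_one] at h2
          exact hc0 h2
        have hwnorm : frobInner w.1 w.1 + frobInner w.2 w.2 = 1 := by
          rw [hw1e, hw2e, frobInner_smul_left, frobInner_smul_right, hee,
            frobInner_zero_right _ _ rfl]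
          nlinarith [hc]
        have hl20 : ∀ᶠ t : ℝ in 𝓝[>] 0,
            l20 (Ubar + t • w.1) = l20 Ubar ∧ l20 (Vbar + t • w.2) = l20 Vbar := by
          obtain ⟨i0, hi0⟩ := Function.ne_iff.mp hj
          have habs : (0:ℝ) < |Vbar i0 j| := abs_pos.mpr hi0
          have hIoo : Set.Ioo (0:ℝ) |Vbar i0 j| ∈ 𝓝[>] (0:ℝ) :=
            Ioo_mem_nhdsGT_of_mem ⟨le_refl 0, habs⟩
          filter_upwards [hIoo] with t ht
          constructor
          · simp [hw1e]
          · apply l20_congr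
            intro j'
            by_cases hjj : j' = j
            · subst hjj
              have hcol : (fun i' => (Vbar + t • w.2) i' j') ≠ 0 := by
                intro h0
                have hval : (Vbar + t • w.2) i0 j' = 0 := congrFun h0 i0
                rw [hw2e, Matrix.add_apply, Matrix.smul_apply, Matrix.smul_apply,
                  smul_eq_mul, smul_eq_mul] at hval
                have hb : |t * (c * e i0 j')| ≤ t := by
                  rw [abs_mul, abs_mul, abs_of_pos ht.1]
                  have hbe := stdBasis_abs_le i i0 j' j'
                  rw [← he] at hbe
                  have h1 : |c| * |e i0 j'| ≤ 1 :=
                    mul_le_one₀ hcabs (abs_nonneg _) hbe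
                  nlinarith [ht.1, h1]
                have : Vbar i0 j' = -(t * (c * e i0 j')) := by linarith [hval]
                rw [this, abs_neg] at ht
                have := ht.2
                linarith [hb]
              exact iff_of_true hcol hj
            · have hcols : (fun i' => (Vbar + t • w.2) i' j') = (fun i' => Vbar i' j') := by
                funext i'
                rw [hw2e, Matrix.add_apply, Matrix.smul_apply, Matrix.smul_apply,
                  smul_eq_mul, smul_eq_mul, he, stdBasis_col_ne i i' j j' hjj]
                ring
              rw [hcols]
        have hkey := key w hwne hwnorm hl20
        rw [hDap] at hkey
        rw [hw1e, hw2e, frobInner_smul_right, frobInner_smul_right,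
          frobInner_zero_right _ _ rfl, frobInner_zero_right _ _ rfl, he,
          frobInner_stdBasis, frobInner_stdBasis] at hkey
        nlinarith [hkey]
      have h1 := hstep 1 (by norm_num) (by norm_num)
      have h2 := hstep (-1) (by norm_num) (by norm_num)
      have hQH : H i j = Q i j := by nlinarith [h1, h2]
      rw [hQH, hQap]

  · rintro ⟨hG, hH⟩
    set w1 : Matrix (Fin n) (Fin r) ℝ := G - P with hw1def
    set w2 : Matrix (Fin m) (Fin r) ℝ := H - Q with hw2def
    set C : ℝ := (∑ i, ∑ j, |w1 i j|) + (∑ i, ∑ j, |w2 i j|) with hCdef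
    have hC0 : 0 ≤ C := by
      apply add_nonneg <;>
        exact Finset.sum_nonneg fun _ _ => Finset.sum_nonneg fun _ _ => abs_nonneg _
    have hw1 : ∀ j, (fun i => Ubar i j) ≠ 0 → ∀ i, w1 i j = 0 := by
      intro j hj i
      simp only [hw1def, Matrix.sub_apply]
      rw [hG j hj i, hPap]; ring
    have hw2 : ∀ j, (fun i => Vbar i j) ≠ 0 → ∀ i, w2 i j = 0 := by
      intro j hj i
      simp only [hw2def, Matrix.sub_apply]
      rw [hH j hj i, hQap]; ring
    have claim : ∀ ε : ℝ, 0 < ε →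
        ∀ᶠ x' : Matrix (Fin n) (Fin r) ℝ × Matrix (Fin m) (Fin r) ℝ in 𝓝[≠] (Ubar, Vbar),
          (((-ε : ℝ) : EReal) ≤
            (((Phi f lam mu x'.1 x'.2 - Phi f lam mu Ubar Vbar -
              (frobInner G (x'.1 - Ubar) + frobInner H (x'.2 - Vbar))) /
              Real.sqrt (frobInner (x'.1 - Ubar) (x'.1 - Ubar) +
                frobInner (x'.2 - Vbar) (x'.2 - Vbar)) : ℝ) : EReal)) := by
      intro ε hε
      have ho := (Asymptotics.isLittleO_iff.mp hD.isLittleO) hε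
      have hcolU : ∀ᶠ x' : Matrix (Fin n) (Fin r) ℝ × Matrix (Fin m) (Fin r) ℝ in 𝓝 (Ubar, Vbar),
          ∀ j : Fin r, (fun i => Ubar i j) ≠ 0 → (fun i => x'.1 i j) ≠ 0 := by
        rw [eventually_all]
        intro j
        by_cases hj : (fun i => Ubar i j) = 0
        · filter_upwards [] with x' h
          exact absurd hj h
        · obtain ⟨i0, hi0⟩ := Function.ne_iff.mp hj
          have hi0' : (0 : ℝ) < |Ubar i0 j| := abs_pos.mpr hi0
          filter_upwards [Metric.ball_mem_nhds _ hi0'] with x' hx' _ h0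
          have hent : |x'.1 i0 j - Ubar i0 j| ≤ dist x' (Ubar, Vbar) := by
            have h1 : |(x'.1 - Ubar) i0 j| ≤ Real.sqrt (frobInner (x'.1 - Ubar) (x'.1 - Ubar)) :=
              entry_abs_le_sqrt _ i0 j
            rw [← norm_eq_sqrt_frobInner] at h1
            calc |x'.1 i0 j - Ubar i0 j| = |(x'.1 - Ubar) i0 j| := by rw [Matrix.sub_apply]
              _ ≤ ‖x'.1 - Ubar‖ := h1
              _ ≤ ‖x' - (Ubar, Vbar)‖ := by
                  have h2 := norm_fst_le (x' - (Ubar, Vbar))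
                  simpa using h2
              _ = dist x' (Ubar, Vbar) := (dist_eq_norm _ _).symm
          have hz : x'.1 i0 j = 0 := congrFun h0 i0
          rw [hz] at hent
          rw [Metric.mem_ball] at hx'
          simp only [zero_sub, abs_neg] at hent
          linarith
      have hcolV : ∀ᶠ x' : Matrix (Fin n) (Fin r) ℝ × Matrix (Fin m) (Fin r) ℝ in 𝓝 (Ubar, Vbar),
          ∀ j : Fin r, (fun i => Vbar i j) ≠ 0 → (fun i => x'.2 i j) ≠ 0 := by
        rw [eventually_all]
        intro j
        by_cases hj : (fun i => Vbar i j) = 0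
        · filter_upwards [] with x' h
          exact absurd hj h
        · obtain ⟨i0, hi0⟩ := Function.ne_iff.mp hj
          have hi0' : (0 : ℝ) < |Vbar i0 j| := abs_pos.mpr hi0
          filter_upwards [Metric.ball_mem_nhds _ hi0'] with x' hx' _ h0
          have hent : |x'.2 i0 j - Vbar i0 j| ≤ dist x' (Ubar, Vbar) := by
            have h1 : |(x'.2 - Vbar) i0 j| ≤ Real.sqrt (frobInner (x'.2 - Vbar) (x'.2 - Vbar)) :=
              entry_abs_le_sqrt _ i0 j
            rw [← norm_eq_sqrt_frobInner] at h1
            calc |x'.2 i0 j - Vbar i0 j| = |(x'.2 - Vbar) i0 j| := by rw [Matrix.sub_apply]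
              _ ≤ ‖x'.2 - Vbar‖ := h1
              _ ≤ ‖x' - (Ubar, Vbar)‖ := by
                  have h2 := norm_snd_le (x' - (Ubar, Vbar))
                  simpa using h2
              _ = dist x' (Ubar, Vbar) := (dist_eq_norm _ _).symm
          have hz : x'.2 i0 j = 0 := congrFun h0 i0
          rw [hz] at hent
          rw [Metric.mem_ball] at hx'
          simp only [zero_sub, abs_neg] at hent
          linarith
      have hsmallpos : (0 : ℝ) < lam / (C + 1) / 2 := by positivity
      have hsmall : ∀ᶠ x' : Matrix (Fin n) (Fin r) ℝ × Matrix (Fin m) (Fin r) ℝ in 𝓝 (Ubar, Vbar),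
          dist x' (Ubar, Vbar) < lam / (C + 1) / 2 := by
        filter_upwards [Metric.ball_mem_nhds
          ((Ubar, Vbar) : Matrix (Fin n) (Fin r) ℝ × Matrix (Fin m) (Fin r) ℝ) hsmallpos] with x' hx'
        exact Metric.mem_ball.mp hx'
      filter_upwards [eventually_nhdsWithin_of_eventually_nhds ho,
        eventually_nhdsWithin_of_eventually_nhds hcolU,
        eventually_nhdsWithin_of_eventually_nhds hcolV,
        eventually_nhdsWithin_of_eventually_nhds hsmall,
        self_mem_nhdsWithin] with x' hox' hcU hcV hball hx'ne
      have hx'ne' : x' ≠ (Ubar, Vbar) := hx'ne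
      set a1 : Matrix (Fin n) (Fin r) ℝ := x'.1 - Ubar with ha1
      set a2 : Matrix (Fin m) (Fin r) ℝ := x'.2 - Vbar with ha2
      set Nd : ℝ := Real.sqrt (frobInner a1 a1 + frobInner a2 a2) with hNd
      have hNd0 : 0 ≤ Nd := Real.sqrt_nonneg _
      have hfn1 := frobInner_self_nonneg a1
      have hfn2 := frobInner_self_nonneg a2
      have hsum_pos : 0 < frobInner a1 a1 + frobInner a2 a2 := by
        have hne : ¬(a1 = 0 ∧ a2 = 0) := by
          rintro ⟨h1, h2⟩
          apply hx'ne'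
          have e1 : x'.1 = Ubar := by rwa [ha1, sub_eq_zero] at h1
          have e2 : x'.2 = Vbar := by rwa [ha2, sub_eq_zero] at h2
          exact Prod.ext e1 e2
        rcases not_and_or.mp hne with h | h
        · have hp : 0 < ‖a1‖ := norm_pos_iff.mpr h
          nlinarith [frobInner_self_eq_norm_sq a1]
        · have hp : 0 < ‖a2‖ := norm_pos_iff.mpr h
          nlinarith [frobInner_self_eq_norm_sq a2]
      have hNdpos : 0 < Nd := Real.sqrt_pos.mpr hsum_pos
      have hnorm_le : ‖x' - ((Ubar, Vbar) :
          Matrix (Fin n) (Fin r) ℝ × Matrix (Fin m) (Fin r) ℝ)‖ ≤ Nd := by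
        rw [Prod.norm_def]
        apply max_le
        · rw [show (x' - ((Ubar, Vbar) : Matrix (Fin n) (Fin r) ℝ ×
            Matrix (Fin m) (Fin r) ℝ)).1 = a1 from rfl, norm_eq_sqrt_frobInner]
          exact Real.sqrt_le_sqrt (by linarith)
        · rw [show (x' - ((Ubar, Vbar) : Matrix (Fin n) (Fin r) ℝ ×
            Matrix (Fin m) (Fin r) ℝ)).2 = a2 from rfl, norm_eq_sqrt_frobInner]
          exact Real.sqrt_le_sqrt (by linarith)
      have hNd_le : Nd < lam / (C + 1) := by
        have h1 : Nd ≤ ‖a1‖ + ‖a2‖ := by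
          rw [hNd, norm_eq_sqrt_frobInner, norm_eq_sqrt_frobInner]
          have s1 := Real.sqrt_nonneg (frobInner a1 a1)
          have s2 := Real.sqrt_nonneg (frobInner a2 a2)
          have e1 := Real.sq_sqrt hfn1
          have e2 := Real.sq_sqrt hfn2
          have hle : frobInner a1 a1 + frobInner a2 a2 ≤
              (Real.sqrt (frobInner a1 a1) + Real.sqrt (frobInner a2 a2)) ^ 2 := by nlinarith
          calc Real.sqrt (frobInner a1 a1 + frobInner a2 a2)
              ≤ Real.sqrt ((Real.sqrt (frobInner a1 a1) + Real.sqrt (frobInner a2 a2)) ^ 2) :=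
                Real.sqrt_le_sqrt hle
            _ = Real.sqrt (frobInner a1 a1) + Real.sqrt (frobInner a2 a2) :=
                Real.sqrt_sq (by positivity)
        have h2 : ‖a1‖ ≤ dist x' ((Ubar, Vbar) :
            Matrix (Fin n) (Fin r) ℝ × Matrix (Fin m) (Fin r) ℝ) := by
          rw [dist_eq_norm]
          have h2 := norm_fst_le (x' - ((Ubar, Vbar) :
            Matrix (Fin n) (Fin r) ℝ × Matrix (Fin m) (Fin r) ℝ))
          simpa using h2
        have h3 : ‖a2‖ ≤ dist x' ((Ubar, Vbar) :
            Matrix (Fin n) (Fin r) ℝ × Matrix (Fin m) (Fin r) ℝ) := by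
          rw [dist_eq_norm]
          have h3 := norm_snd_le (x' - ((Ubar, Vbar) :
            Matrix (Fin n) (Fin r) ℝ × Matrix (Fin m) (Fin r) ℝ))
          simpa using h3
        calc Nd ≤ ‖a1‖ + ‖a2‖ := h1
          _ < lam / (C + 1) := by linarith
      set oterm : ℝ := gs x' - gs (Ubar, Vbar) - (frobInner P a1 + frobInner Q a2) with hot
      have hob : |oterm| ≤ ε * Nd := by
        have h1 := hox'
        erw [hDap (x' - ((Ubar, Vbar) :
          Matrix (Fin n) (Fin r) ℝ × Matrix (Fin m) (Fin r) ℝ))] at h1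
        rw [show (x' - ((Ubar, Vbar) : Matrix (Fin n) (Fin r) ℝ ×
          Matrix (Fin m) (Fin r) ℝ)).1 = a1 from rfl] at h1
        rw [show (x' - ((Ubar, Vbar) : Matrix (Fin n) (Fin r) ℝ ×
          Matrix (Fin m) (Fin r) ℝ)).2 = a2 from rfl] at h1
        rw [Real.norm_eq_abs] at h1
        calc |oterm| ≤ ε * ‖x' - ((Ubar, Vbar) :
            Matrix (Fin n) (Fin r) ℝ × Matrix (Fin m) (Fin r) ℝ)‖ := h1
          _ ≤ ε * Nd := mul_le_mul_of_nonneg_left hnorm_le hε.le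
      set TU : Set (Fin r) := {j | (fun i => Ubar i j) = 0 ∧ (fun i => x'.1 i j) ≠ 0} with hTUdef
      set TV : Set (Fin r) := {j | (fun i => Vbar i j) = 0 ∧ (fun i => x'.2 i j) ≠ 0} with hTVdef
      have hkU : (l20 x'.1 : ℝ) = (l20 Ubar : ℝ) + (TU.ncard : ℝ) := l20_eq_add hcU
      have hkV : (l20 x'.2 : ℝ) = (l20 Vbar : ℝ) + (TV.ncard : ℝ) := l20_eq_add hcV
      have hGsplit : frobInner G a1 = frobInner P a1 + frobInner w1 a1 := by
        rw [← frobInner_add_left]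
        congr 1
        rw [hw1def]; abel
      have hHsplit : frobInner H a2 = frobInner Q a2 + frobInner w2 a2 := by
        rw [← frobInner_add_left]
        congr 1
        rw [hw2def]; abel
      have hnum : Phi f lam mu x'.1 x'.2 - Phi f lam mu Ubar Vbar -
          (frobInner G a1 + frobInner H a2)
          = oterm + lam * ((TU.ncard : ℝ) + (TV.ncard : ℝ))
            - (frobInner w1 a1 + frobInner w2 a2) := by
        rw [hPhi x'.1 x'.2, hPhi Ubar Vbar, hkU, hkV, hGsplit, hHsplit, hot]
        simp only [Prod.mk.eta]
        ring
      rw [EReal.coe_le_coe_iff, hnum, le_div_iff₀ hNdpos]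
      have hO1 := (abs_le.mp hob).1
      by_cases hcase : TU = ∅ ∧ TV = ∅
      · have hWU : frobInner w1 a1 = 0 := by
          apply Finset.sum_eq_zero; intro i _
          apply Finset.sum_eq_zero; intro j _
          by_cases hj : (fun i => Ubar i j) = 0
          · have hx0 : (fun i => x'.1 i j) = 0 := by
              by_contra hne
              have hmem : j ∈ TU := ⟨hj, hne⟩
              rw [hcase.1] at hmem
              exact hmem
            have e1 : x'.1 i j = 0 := congrFun hx0 i
            have e2 : Ubar i j = 0 := congrFun hj i
            have hz : a1 i j = 0 := by
              simp [ha1, Matrix.sub_apply, e1, e2]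
            rw [hz, mul_zero]
          · rw [hw1 j hj i, zero_mul]
        have hWV : frobInner w2 a2 = 0 := by
          apply Finset.sum_eq_zero; intro i _
          apply Finset.sum_eq_zero; intro j _
          by_cases hj : (fun i => Vbar i j) = 0
          · have hx0 : (fun i => x'.2 i j) = 0 := by
              by_contra hne
              have hmem : j ∈ TV := ⟨hj, hne⟩
              rw [hcase.2] at hmem
              exact hmem
            have e1 : x'.2 i j = 0 := congrFun hx0 i
            have e2 : Vbar i j = 0 := congrFun hj i
            have hz : a2 i j = 0 := by
              simp [ha2, Matrix.sub_apply, e1, e2]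
            rw [hz, mul_zero]
          · rw [hw2 j hj i, zero_mul]
        rw [hcase.1, hcase.2, hWU, hWV]
        simp only [Set.ncard_empty, Nat.cast_zero]
        nlinarith
      · have hk1 : (1 : ℝ) ≤ (TU.ncard : ℝ) + (TV.ncard : ℝ) := by
          rcases not_and_or.mp hcase with h | h
          · have hp : 0 < TU.ncard :=
              (Set.ncard_pos (Set.toFinite _)).mpr (Set.nonempty_iff_ne_empty.mpr h)
            have h1 : (1 : ℝ) ≤ (TU.ncard : ℝ) := by exact_mod_cast hp
            have h2 : (0 : ℝ) ≤ (TV.ncard : ℝ) := Nat.cast_nonneg _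
            linarith
          · have hp : 0 < TV.ncard :=
              (Set.ncard_pos (Set.toFinite _)).mpr (Set.nonempty_iff_ne_empty.mpr h)
            have h1 : (1 : ℝ) ≤ (TV.ncard : ℝ) := by exact_mod_cast hp
            have h2 : (0 : ℝ) ≤ (TU.ncard : ℝ) := Nat.cast_nonneg _
            linarith
        have hent1 : ∀ i j, |a1 i j| ≤ Nd := fun i j =>
          (entry_abs_le_sqrt a1 i j).trans (Real.sqrt_le_sqrt (by linarith))
        have hent2 : ∀ i j, |a2 i j| ≤ Nd := fun i j =>
          (entry_abs_le_sqrt a2 i j).trans (Real.sqrt_le_sqrt (by linarith))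
        have hWb : |frobInner w1 a1 + frobInner w2 a2| ≤ C * Nd := by
          calc |frobInner w1 a1 + frobInner w2 a2|
              ≤ |frobInner w1 a1| + |frobInner w2 a2| := abs_add_le _ _
            _ ≤ (∑ i, ∑ j, |w1 i j|) * Nd + (∑ i, ∑ j, |w2 i j|) * Nd :=
                add_le_add (abs_frobInner_le _ _ _ hent1) (abs_frobInner_le _ _ _ hent2)
            _ = C * Nd := by rw [hCdef]; ring
        have hCN : (C + 1) * Nd ≤ lam := by
          have h1 : Nd * (C + 1) < lam := by
            have := (lt_div_iff₀ (by linarith : (0 : ℝ) < C + 1)).mp hNd_le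
            linarith
          nlinarith
        have hW := (abs_le.mp hWb).2
        have hlk : lam * 1 ≤ lam * ((TU.ncard : ℝ) + (TV.ncard : ℝ)) :=
          mul_le_mul_of_nonneg_left hk1 hlam.le
        nlinarith
    simp only [regularSubdiffP, Set.mem_setOf_eq]
    have hlower : ∀ ε : ℝ, 0 < ε → ((-ε : ℝ) : EReal) ≤ Filter.liminf
        (fun x' => (((Phi f lam mu x'.1 x'.2 - Phi f lam mu Ubar Vbar -
          (frobInner G (x'.1 - Ubar) + frobInner H (x'.2 - Vbar))) /
          Real.sqrt (frobInner (x'.1 - Ubar) (x'.1 - Ubar) +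
            frobInner (x'.2 - Vbar) (x'.2 - Vbar)) : ℝ) : EReal))
        (𝓝[≠] ((Ubar, Vbar) : Matrix (Fin n) (Fin r) ℝ × Matrix (Fin m) (Fin r) ℝ)) :=
      fun ε hε => Filter.le_liminf_of_le (by isBoundedDefault) (claim ε hε)
    refine le_of_forall_lt ?_
    intro c hc
    induction c using EReal.rec with
    | bot =>
        refine lt_of_lt_of_le ?_ (hlower 1 one_pos)
        exact EReal.bot_lt_coe _
    | coe c' =>
        have hc' : c' < 0 := by exact_mod_cast hc
        refine lt_of_lt_of_le ?_ (hlower (-c' / 2) (by linarith))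
        have : c' < -(-c' / 2) := by linarith
        exact_mod_cast this
    | top => exact absurd hc (by simp)
end

section
/- Let f : ℝ^{n×m} → ℝ be continuously differentiable and μ > 0. Suppose (Ū, V̄) ∈ ℝ^{n×r} × ℝ^{m×r} satisfies ∇f(Ū V̄ᵀ) V̄_j + μ Ū_j = 0 for every column index j with Ū_j ≠ 0, and (∇f(Ū V̄ᵀ))ᵀ Ū_j + μ V̄_j = 0 for every column index j with V̄_j ≠ 0. Then the sets of nonzero column indices of Ū and of V̄ coincide (J_Ū = J_V̄), and moreover Ūᵀ Ū = V̄ᵀ V̄. -/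
open Filter Topology Matrix

attribute [local instance] Matrix.frobeniusSeminormedAddCommGroup
  Matrix.frobeniusNormedAddCommGroup Matrix.frobeniusNormedSpace

/-- if `(Ū,V̄)` satisfies the criticality conditions
`∇f(ŪV̄ᵀ)V̄_j + μŪ_j = 0` for every nonzero column `j` of `Ū` and
`(∇f(ŪV̄ᵀ))ᵀŪ_j + μV̄_j = 0` for every nonzero column `j` of `V̄`,
then `J_Ū = J_V̄` and `ŪᵀŪ = V̄ᵀV̄`. -/
theorem critical_point_structure {n m r : ℕ}
    (f : Matrix (Fin n) (Fin m) ℝ → ℝ) (f' : Matrix (Fin n) (Fin m) ℝ → Matrix (Fin n) (Fin m) ℝ)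
    (hdiff : Differentiable ℝ f)
    (hgrad : ∀ X H, fderiv ℝ f X H = frobInner (f' X) H)
    (hcont : Continuous f')
    (mu : ℝ) (hmu : 0 < mu)
    (Ubar : Matrix (Fin n) (Fin r) ℝ) (Vbar : Matrix (Fin m) (Fin r) ℝ)
    (hU : ∀ j : Fin r, (fun i => Ubar i j) ≠ 0 →
      ∀ i, (f' (Ubar * Vbarᵀ) * Vbar) i j + mu * Ubar i j = 0)
    (hV : ∀ j : Fin r, (fun i => Vbar i j) ≠ 0 →
      ∀ i, ((f' (Ubar * Vbarᵀ))ᵀ * Ubar) i j + mu * Vbar i j = 0) :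
    (∀ j : Fin r, (fun i => Ubar i j) ≠ 0 ↔ (fun i => Vbar i j) ≠ 0) ∧
      Ubarᵀ * Ubar = Vbarᵀ * Vbar := by

  classical
  set G := f' (Ubar * Vbarᵀ) with hG
  have key : ∀ j : Fin r, (fun i => Ubar i j) ≠ 0 ↔ (fun i => Vbar i j) ≠ 0 := by
    intro j
    constructor
    · intro hUj hVj
      have hVz : ∀ i, Vbar i j = 0 := fun i => congrFun hVj i
      apply hUj
      funext i
      have h := hU j hUj i
      have hz : (G * Vbar) i j = 0 := by
        simp [Matrix.mul_apply, hVz]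
      rw [hz, zero_add] at h
      rcases mul_eq_zero.mp h with h1 | h1
      · exact absurd h1 (ne_of_gt hmu)
      · simpa using h1
    · intro hVj hUj
      have hUz : ∀ i, Ubar i j = 0 := fun i => congrFun hUj i
      apply hVj
      funext i
      have h := hV j hVj i
      have hz : (Gᵀ * Ubar) i j = 0 := by
        simp [Matrix.mul_apply, hUz]
      rw [hz, zero_add] at h
      rcases mul_eq_zero.mp h with h1 | h1
      · exact absurd h1 (ne_of_gt hmu)
      · simpa using h1
  refine ⟨key, ?_⟩
  ext j k
  by_cases hUj : (fun i => Ubar i j) ≠ 0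
  · by_cases hUk : (fun i => Ubar i k) ≠ 0
    · have hVj := (key j).mp hUj
      have h1 : mu * (Ubarᵀ * Ubar) j k = -∑ i, ∑ l, Ubar i j * (G i l * Vbar l k) := by
        rw [Matrix.mul_apply, Finset.mul_sum, ← Finset.sum_neg_distrib]
        apply Finset.sum_congr rfl
        intro i _
        have h := hU k hUk i
        have hm : mu * Ubar i k = -(G * Vbar) i k := by linarith
        have e1 : mu * (Ubarᵀ j i * Ubar i k) = Ubar i j * (mu * Ubar i k) := by
          rw [Matrix.transpose_apply]; ring
        rw [e1, hm, mul_neg, Matrix.mul_apply, Finset.mul_sum]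
      have h2' : mu * (Vbarᵀ * Vbar) j k
          = -∑ l : Fin m, ∑ i : Fin n, Ubar i j * (G i l * Vbar l k) := by
        rw [Matrix.mul_apply, Finset.mul_sum, ← Finset.sum_neg_distrib]
        apply Finset.sum_congr rfl
        intro l _
        have h := hV j hVj l
        have hm : mu * Vbar l j = -(Gᵀ * Ubar) l j := by linarith
        have e1 : mu * (Vbarᵀ j l * Vbar l k) = Vbar l k * (mu * Vbar l j) := by
          rw [Matrix.transpose_apply]; ring
        rw [e1, hm, mul_neg, Matrix.mul_apply, Finset.mul_sum, neg_inj]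
        apply Finset.sum_congr rfl
        intro i _
        rw [Matrix.transpose_apply]; ring
      have h2 : mu * (Vbarᵀ * Vbar) j k = -∑ i, ∑ l, Ubar i j * (G i l * Vbar l k) := by
        rw [h2', Finset.sum_comm]
      exact mul_left_cancel₀ (ne_of_gt hmu) (h1.trans h2.symm)
    · have hUk0 : ∀ i, Ubar i k = 0 := fun i => congrFun (not_not.mp hUk) i
      have hVk0 : ∀ i, Vbar i k = 0 := by
        intro i
        have hz : (fun i => Vbar i k) = 0 := by
          by_contra h; exact hUk ((key k).mpr h)
        exact congrFun hz i
      simp [Matrix.mul_apply, hUk0, hVk0]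
  · have hUj0 : ∀ i, Ubar i j = 0 := fun i => congrFun (not_not.mp hUj) i
    have hVj0 : ∀ i, Vbar i j = 0 := by
      intro i
      have hz : (fun i => Vbar i j) = 0 := by
        by_contra h; exact hUj ((key j).mpr h)
      exact congrFun hz i
    simp [Matrix.mul_apply, hUj0, hVj0]
end

section
/- Let f : ℝ^{n×m} → ℝ be continuously differentiable and μ > 0. For (Ū, V̄) ∈ ℝ^{n×r} × ℝ^{m×r}, the following are equivalent: (a) ∇f(Ū V̄ᵀ) V̄_j + μ Ū_j = 0 for every column index j with Ū_j ≠ 0 and (∇f(Ū V̄ᵀ))ᵀ Ū_j + μ V̄_j = 0 for every column index j with V̄_j ≠ 0; (b) ∇f(Ū V̄ᵀ) V̄ + μ Ū = 0 and (∇f(Ū V̄ᵀ))ᵀ Ū + μ V̄ = 0, i.e. the gradient of F_μ(U,V) = f(UVᵀ) + (μ/2)(‖U‖_F² + ‖V‖_F²) vanishes at (Ū, V̄). -/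
open Filter Topology Matrix

attribute [local instance] Matrix.frobeniusSeminormedAddCommGroup
  Matrix.frobeniusNormedAddCommGroup Matrix.frobeniusNormedSpace

/-- the columnwise criticality conditions of `Φ_{λ,μ}` at `(Ū,V̄)` hold
if and only if the full gradient of `F_μ(U,V) = f(UVᵀ) + (μ/2)(‖U‖_F² + ‖V‖_F²)`
vanishes at `(Ū,V̄)`, i.e. `∇f(ŪV̄ᵀ)V̄ + μŪ = 0` and `(∇f(ŪV̄ᵀ))ᵀŪ + μV̄ = 0`. -/
theorem critical_iff_gradient_vanishes {n m r : ℕ}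
    (f : Matrix (Fin n) (Fin m) ℝ → ℝ) (f' : Matrix (Fin n) (Fin m) ℝ → Matrix (Fin n) (Fin m) ℝ)
    (hdiff : Differentiable ℝ f)
    (hgrad : ∀ X H, fderiv ℝ f X H = frobInner (f' X) H)
    (hcont : Continuous f')
    (mu : ℝ) (hmu : 0 < mu)
    (Ubar : Matrix (Fin n) (Fin r) ℝ) (Vbar : Matrix (Fin m) (Fin r) ℝ) :
    ((∀ j : Fin r, (fun i => Ubar i j) ≠ 0 →
        ∀ i, (f' (Ubar * Vbarᵀ) * Vbar) i j + mu * Ubar i j = 0) ∧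
      (∀ j : Fin r, (fun i => Vbar i j) ≠ 0 →
        ∀ i, ((f' (Ubar * Vbarᵀ))ᵀ * Ubar) i j + mu * Vbar i j = 0)) ↔
      (f' (Ubar * Vbarᵀ) * Vbar + mu • Ubar = 0 ∧
        (f' (Ubar * Vbarᵀ))ᵀ * Ubar + mu • Vbar = 0) := by
  set G := f' (Ubar * Vbarᵀ) with hG
  constructor
  · rintro ⟨hU, hV⟩
    -- key: if a column of Ubar is zero then the corresponding column of Vbar is zero, and conversely
    have keyUV : ∀ j : Fin r, (fun i => Ubar i j) = 0 → (fun i => Vbar i j) = 0 := by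
      intro j hUj
      by_contra hVj
      have h := hV j hVj
      have hz : ∀ i, (Gᵀ * Ubar) i j = 0 := by
        intro i
        simp only [Matrix.mul_apply]
        apply Finset.sum_eq_zero
        intro k _
        have : Ubar k j = 0 := congrFun hUj k
        simp [this]
      apply hVj
      funext i
      have := h i
      rw [hz i, zero_add] at this
      exact (mul_eq_zero.mp this).resolve_left (ne_of_gt hmu)
    have keyVU : ∀ j : Fin r, (fun i => Vbar i j) = 0 → (fun i => Ubar i j) = 0 := by
      intro j hVj
      by_contra hUj
      have h := hU j hUj
      have hz : ∀ i, (G * Vbar) i j = 0 := by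
        intro i
        simp only [Matrix.mul_apply]
        apply Finset.sum_eq_zero
        intro k _
        have : Vbar k j = 0 := congrFun hVj k
        simp [this]
      apply hUj
      funext i
      have := h i
      rw [hz i, zero_add] at this
      exact (mul_eq_zero.mp this).resolve_left (ne_of_gt hmu)
    constructor
    · ext i j
      simp only [Matrix.add_apply, Matrix.smul_apply, Matrix.zero_apply, smul_eq_mul]
      by_cases hUj : (fun i => Ubar i j) = 0
      · have hVj := keyUV j hUj
        have h1 : Ubar i j = 0 := congrFun hUj i
        have h2 : (G * Vbar) i j = 0 := by
          simp only [Matrix.mul_apply]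
          apply Finset.sum_eq_zero
          intro k _
          have : Vbar k j = 0 := congrFun hVj k
          simp [this]
        rw [h1, h2]; ring
      · exact hU j hUj i
    · ext i j
      simp only [Matrix.add_apply, Matrix.smul_apply, Matrix.zero_apply, smul_eq_mul]
      by_cases hVj : (fun i => Vbar i j) = 0
      · have hUj := keyVU j hVj
        have h1 : Vbar i j = 0 := congrFun hVj i
        have h2 : (Gᵀ * Ubar) i j = 0 := by
          simp only [Matrix.mul_apply]
          apply Finset.sum_eq_zero
          intro k _
          have : Ubar k j = 0 := congrFun hUj k
          simp [this]
        rw [h1, h2]; ring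
      · exact hV j hVj i
  · rintro ⟨h1, h2⟩
    constructor
    · intro j _ i
      have := congrFun (congrFun h1 i) j
      simpa using this
    · intro j _ i
      have := congrFun (congrFun h2 i) j
      simpa using this
end

section
/- Let X ∈ ℝ^{n×m} with rank(X) ≤ r. Then rank(X) = min { (1/2)(‖U‖_{2,0} + ‖V‖_{2,0}) : U ∈ ℝ^{n×r}, V ∈ ℝ^{m×r}, X = UVᵀ }. In particular: (a) for every U ∈ ℝ^{n×r} and V ∈ ℝ^{m×r} with X = UVᵀ, one has 2·rank(X) ≤ ‖U‖_{2,0} + ‖V‖_{2,0}; and (b) there exist U ∈ ℝ^{n×r}, V ∈ ℝ^{m×r} with X = UVᵀ and ‖U‖_{2,0} = ‖V‖_{2,0} = rank(X). -/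
open Filter Topology Matrix

set_option linter.unnecessarySimpa false
set_option linter.unreachableTactic false
set_option linter.unusedTactic false

lemma rank_le_l20 {a b r : ℕ} (X : Matrix (Fin a) (Fin b) ℝ)
    (U : Matrix (Fin a) (Fin r) ℝ) (V : Matrix (Fin b) (Fin r) ℝ)
    (h : X = U * Vᵀ) : X.rank ≤ l20 U := by
  classical
  set S : Set (Fin r) := {j | (fun i => U i j) ≠ 0} with hS
  have hSfin : S.Finite := Set.toFinite S
  set s : Finset (Fin r) := hSfin.toFinset with hs
  have hcard : l20 U = s.card := by
    rw [l20, Set.ncard_eq_toFinset_card S hSfin]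
  set U' : Matrix (Fin a) s ℝ := fun i j => U i j.1 with hU'
  set V' : Matrix (Fin b) s ℝ := fun i j => V i j.1 with hV'
  have hfac : X = U' * V'ᵀ := by
    ext i i'
    rw [h]
    simp only [Matrix.mul_apply, Matrix.transpose_apply]
    simp only [hU', hV']
    rw [Finset.sum_coe_sort s (fun j => U i j * V i' j)]
    refine (Finset.sum_subset (Finset.subset_univ s) ?_).symm
    intro j _ hj
    have : (fun i => U i j) = 0 := by
      by_contra hne
      exact hj (by simpa [hs, hS] using hne)
    have := congrFun this i
    simp at this
    simp [this]
  calc X.rank = (U' * V'ᵀ).rank := by rw [hfac]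
    _ ≤ U'.rank := Matrix.rank_mul_le_left _ _
    _ ≤ Fintype.card s := Matrix.rank_le_card_width _
    _ = s.card := Fintype.card_coe s
    _ = l20 U := hcard.symm

lemma exists_fac {n m r : ℕ} (X : Matrix (Fin n) (Fin m) ℝ) (hX : X.rank ≤ r) :
    ∃ (U : Matrix (Fin n) (Fin r) ℝ) (V : Matrix (Fin m) (Fin r) ℝ),
      X = U * Vᵀ ∧ l20 U = X.rank ∧ l20 V = X.rank := by
  classical
  set k := X.rank with hk
  have hkr : k ≤ r := hX
  set W : Submodule ℝ (Fin n → ℝ) := LinearMap.range X.mulVecLin with hW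
  have hrk : Module.finrank ℝ W = k := rfl
  let b : Module.Basis (Fin k) ℝ W := Module.finBasisOfFinrankEq ℝ W hrk
  have memcol : ∀ i : Fin m, Xᵀ i ∈ W := fun i =>
    ⟨Pi.single i 1, by ext i'; simp [Matrix.mulVecLin_apply]⟩
  let c : Fin m → W := fun i => ⟨Xᵀ i, memcol i⟩
  let A : Matrix (Fin n) (Fin k) ℝ := fun i j => (b j : Fin n → ℝ) i
  let B : Matrix (Fin k) (Fin m) ℝ := fun j i => b.repr (c i) j
  have hAB : X = A * B := by
    ext i' i
    have h1 := b.sum_repr (c i)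
    have h2 := congrFun (congrArg Subtype.val h1) i'
    simp only [AddSubmonoidClass.coe_finset_sum, SetLike.val_smul, Finset.sum_apply,
      Pi.smul_apply, smul_eq_mul] at h2
    rw [Matrix.mul_apply]
    calc X i' i = Xᵀ i i' := rfl
      _ = ∑ x : Fin k, (b.repr (c i)) x * (b x : Fin n → ℝ) i' := h2.symm
      _ = ∑ j : Fin k, A i' j * B j i := Finset.sum_congr rfl fun j _ => mul_comm _ _
  let U : Matrix (Fin n) (Fin r) ℝ := fun i j => if h : (j : ℕ) < k then A i ⟨j, h⟩ else 0
  let V : Matrix (Fin m) (Fin r) ℝ := fun i j => if h : (j : ℕ) < k then B ⟨j, h⟩ i else 0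
  have hUcol : ∀ j : Fin r, (fun i => U i j) ≠ 0 ↔ (j : ℕ) < k := by
    intro j
    constructor
    · intro hne
      by_contra hlt
      exact hne (funext fun i => by simp [U, hlt])
    · intro hlt hz
      have hb : b ⟨j, hlt⟩ = 0 := by
        apply Subtype.ext
        funext i
        have := congrFun hz i
        simpa [U, hlt, A] using this
      exact b.ne_zero _ hb
  have hVcol : ∀ j : Fin r, (fun i => V i j) ≠ 0 ↔ (j : ℕ) < k := by
    intro j
    constructor
    · intro hne
      by_contra hlt
      exact hne (funext fun i => by simp [V, hlt])
    · intro hlt hz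
      set jj : Fin k := ⟨j, hlt⟩
      have hz' : ∀ i : Fin m, b.repr (c i) jj = 0 := by
        intro i
        have := congrFun hz i
        simpa [V, hlt, B] using this
      obtain ⟨x, hx⟩ := (b jj).2
      have hsum : b jj = ∑ i : Fin m, x i • c i := by
        apply Subtype.ext
        rw [← hx]
        simp only [AddSubmonoidClass.coe_finset_sum, SetLike.val_smul]
        funext i'
        simp [Matrix.mulVecLin_apply, Matrix.mulVec, dotProduct, Finset.sum_apply,
          mul_comm, c]
      have h1 : b.repr (b jj) jj = 1 := by simp
      rw [hsum, map_sum] at h1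
      simp only [_root_.map_smul, Finsupp.smul_apply, Finsupp.coe_finset_sum, Finset.sum_apply,
        smul_eq_mul] at h1
      simp [hz'] at h1
  have hset : ∀ (C : Type) , True := fun _ => trivial
  refine ⟨U, V, ?_, ?_, ?_⟩
  · rw [hAB]
    ext i i'
    simp only [Matrix.mul_apply, Matrix.transpose_apply]
    have hvan : ∀ j ∈ Finset.univ, j ∉ Finset.univ.map (Fin.castLEEmb hkr) →
        U i j * V i' j = 0 := by
      intro j _ hj
      have hlt : ¬ (j : ℕ) < k := by
        simp only [Finset.mem_map, Finset.mem_univ, true_and, Fin.castLEEmb] at hj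
        push_neg at hj
        intro h
        exact hj ⟨j, h⟩ (by ext; simp [Fin.castLE])
      simp [U, hlt]
    rw [← Finset.sum_subset (Finset.subset_univ _) hvan, Finset.sum_map]
    refine Finset.sum_congr rfl fun j _ => ?_
    have hlt : ((Fin.castLEEmb hkr j : Fin r) : ℕ) < k := by simp [Fin.castLEEmb]
    simp only [U, V, dif_pos hlt]
    congr 1 <;> · congr 1; ext; simp [Fin.castLEEmb]
  · rw [l20]
    have : {j : Fin r | (fun i => U i j) ≠ 0} = ↑(Finset.univ.map (Fin.castLEEmb hkr)) := by
      ext j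
      simp only [Set.mem_setOf_eq, hUcol j, Finset.coe_map, Finset.coe_univ, Set.image_univ]
      constructor
      · intro h; exact ⟨⟨j, h⟩, by ext; simp⟩
      · rintro ⟨a, rfl⟩; simpa using a.2
    rw [this, Set.ncard_coe_finset]
    simp
  · rw [l20]
    have : {j : Fin r | (fun i => V i j) ≠ 0} = ↑(Finset.univ.map (Fin.castLEEmb hkr)) := by
      ext j
      simp only [Set.mem_setOf_eq, hVcol j, Finset.coe_map, Finset.coe_univ, Set.image_univ]
      constructor
      · intro h; exact ⟨⟨j, h⟩, by ext; simp⟩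
      · rintro ⟨a, rfl⟩; simpa using a.2
    rw [this, Set.ncard_coe_finset]
    simp

/-- for `X ∈ ℝ^{n×m}` with `rank(X) ≤ r`,
`rank(X) = min{(1/2)(‖U‖_{2,0} + ‖V‖_{2,0}) : X = UVᵀ}`. In particular:
(a) `2·rank(X) ≤ ‖U‖_{2,0} + ‖V‖_{2,0}` whenever `X = UVᵀ`; and
(b) there is a factorization `X = UVᵀ` with `‖U‖_{2,0} = ‖V‖_{2,0} = rank(X)`. -/
theorem rank_eq_min_l20 {n m r : ℕ} (X : Matrix (Fin n) (Fin m) ℝ) (hX : X.rank ≤ r) :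
    (∀ (U : Matrix (Fin n) (Fin r) ℝ) (V : Matrix (Fin m) (Fin r) ℝ),
        X = U * Vᵀ → 2 * X.rank ≤ l20 U + l20 V) ∧
      (∃ (U : Matrix (Fin n) (Fin r) ℝ) (V : Matrix (Fin m) (Fin r) ℝ),
        X = U * Vᵀ ∧ l20 U = X.rank ∧ l20 V = X.rank) := by
  refine ⟨?_, exists_fac X hX⟩
  intro U V h
  have h1 := rank_le_l20 X U V h
  have h2 := rank_le_l20 Xᵀ V U (by rw [h, Matrix.transpose_mul, Matrix.transpose_transpose])
  rw [Matrix.rank_transpose] at h2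
  omega
end

section
/- Let f : ℝ^{n×m} → ℝ be differentiable with ∇f Lipschitz continuous with modulus L_f (Frobenius norm), and let λ > 0, μ ≥ 0. Fix V ∈ ℝ^{m×r} and set τ = L_f‖V‖² (spectral norm of V). Let Ũ ∈ ℝ^{n×r}, let γ > τ, and suppose U⁺ is a global minimizer over ℝ^{n×r} of U ↦ ⟨∇f(ŨVᵀ)V, U⟩ + (γ/2)‖U − Ũ‖_F² + (μ/2)‖U‖_F² + λ‖U‖_{2,0}. Then for every U ∈ ℝ^{n×r}: f(U⁺Vᵀ) + (μ/2)‖U⁺‖_F² + λ‖U⁺‖_{2,0} + ((γ − τ)/2)‖U⁺ − Ũ‖_F² ≤ f(UVᵀ) + (μ/2)‖U‖_F² + λ‖U‖_{2,0} + ((γ + τ)/2)‖U − Ũ‖_F². -/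
open Filter Topology Matrix

attribute [local instance] Matrix.frobeniusSeminormedAddCommGroup
  Matrix.frobeniusNormedAddCommGroup Matrix.frobeniusNormedSpace

/-- The Frobenius norm of a matrix. -/
noncomputable def frobNorm {α β : Type*} [Fintype α] [Fintype β] (A : Matrix α β ℝ) : ℝ :=
  Real.sqrt (frobInner A A)

/-- The spectral norm of a matrix. -/
noncomputable def specNorm {m r : ℕ} (V : Matrix (Fin m) (Fin r) ℝ) : ℝ :=
  ‖LinearMap.toContinuousLinearMap (Matrix.toEuclideanLin V)‖

section helpers
variable {α β : Type*} [Fintype α] [Fintype β]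

lemma frobNorm_nonneg (A : Matrix α β ℝ) : 0 ≤ frobNorm A := Real.sqrt_nonneg _

lemma frobNorm_sq (A : Matrix α β ℝ) : frobNorm A ^ 2 = frobInner A A := by
  rw [frobNorm, Real.sq_sqrt (frobInner_self_nonneg A)]

lemma frobInner_sub_left (A B C : Matrix α β ℝ) :
    frobInner (A - B) C = frobInner A C - frobInner B C := by
  simp [frobInner, Matrix.sub_apply, sub_mul, Finset.sum_sub_distrib]

lemma frobInner_sub_right (A B C : Matrix α β ℝ) :
    frobInner A (B - C) = frobInner A B - frobInner A C := by
  simp [frobInner, Matrix.sub_apply, mul_sub, Finset.sum_sub_distrib]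

lemma frobInner_smul (t : ℝ) (A : Matrix α β ℝ) :
    frobInner (t • A) (t • A) = t ^ 2 * frobInner A A := by
  simp only [frobInner, Matrix.smul_apply, smul_eq_mul, Finset.mul_sum]
  congr 1; ext i; congr 1; ext j; ring

lemma frobNorm_smul (t : ℝ) (A : Matrix α β ℝ) :
    frobNorm (t • A) = |t| * frobNorm A := by
  rw [frobNorm, frobInner_smul, Real.sqrt_mul (sq_nonneg t), Real.sqrt_sq_eq_abs, frobNorm]

lemma frobInner_cs (A B : Matrix α β ℝ) : |frobInner A B| ≤ frobNorm A * frobNorm B := by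
  have h : (frobInner A B) ^ 2 ≤ frobInner A A * frobInner B B := by
    have := Finset.sum_mul_sq_le_sq_mul_sq (Finset.univ : Finset (α × β))
      (fun p => A p.1 p.2) (fun p => B p.1 p.2)
    simpa [frobInner, Fintype.sum_prod_type, pow_two] using this
  calc |frobInner A B| = Real.sqrt ((frobInner A B) ^ 2) := (Real.sqrt_sq_eq_abs _).symm
    _ ≤ Real.sqrt (frobInner A A * frobInner B B) := Real.sqrt_le_sqrt h
    _ = frobNorm A * frobNorm B := Real.sqrt_mul (frobInner_self_nonneg A) _

end helpers

lemma frobInner_mul_adjoint {n m r : ℕ} (M : Matrix (Fin n) (Fin m) ℝ)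
    (W : Matrix (Fin n) (Fin r) ℝ) (V : Matrix (Fin m) (Fin r) ℝ) :
    frobInner M (W * Vᵀ) = frobInner (M * V) W := by
  simp only [frobInner, Matrix.mul_apply, Matrix.transpose_apply, Finset.mul_sum,
    Finset.sum_mul]
  congr 1; ext i
  rw [Finset.sum_comm]
  congr 1; ext k; congr 1; ext j; ring

lemma frobNorm_mul_transpose_le {n m r : ℕ} (A : Matrix (Fin n) (Fin r) ℝ)
    (V : Matrix (Fin m) (Fin r) ℝ) :
    frobNorm (A * Vᵀ) ≤ frobNorm A * specNorm V := by
  have hs : 0 ≤ specNorm V := norm_nonneg _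
  have key : frobInner (A * Vᵀ) (A * Vᵀ) ≤ specNorm V ^ 2 * frobInner A A := by
    have hrow : ∀ i, ∑ j, (A * Vᵀ) i j * (A * Vᵀ) i j ≤
        specNorm V ^ 2 * ∑ k, A i k * A i k := by
      intro i
      set T := LinearMap.toContinuousLinearMap (Matrix.toEuclideanLin V)
      set x : EuclideanSpace ℝ (Fin r) := (WithLp.equiv 2 (Fin r → ℝ)).symm (A i)
      have hTx : T x = (WithLp.equiv 2 (Fin m → ℝ)).symm (V *ᵥ (A i)) := by
        simp [T, x, WithLp.equiv_symm_apply, Matrix.toEuclideanLin_apply_piLp_toLp]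
      have hnx : ‖x‖ ^ 2 = ∑ k, A i k * A i k := by
        rw [EuclideanSpace.norm_eq, Real.sq_sqrt (by positivity)]
        simp [x, WithLp.equiv_symm_apply, Real.norm_eq_abs, sq_abs, sq]
      have hnTx : ‖T x‖ ^ 2 = ∑ j, (A * Vᵀ) i j * (A * Vᵀ) i j := by
        rw [EuclideanSpace.norm_eq, Real.sq_sqrt (by positivity)]
        rw [hTx]
        congr 1; ext j
        simp [WithLp.equiv_symm_apply, Real.norm_eq_abs, sq_abs, sq,
          Matrix.mulVec, Matrix.mul_apply, Matrix.transpose_apply, dotProduct]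
        congr 1 <;> [skip; skip] <;> (apply Finset.sum_congr rfl; intro k _; ring)
      have hle : ‖T x‖ ≤ specNorm V * ‖x‖ := T.le_opNorm x
      calc ∑ j, (A * Vᵀ) i j * (A * Vᵀ) i j = ‖T x‖ ^ 2 := hnTx.symm
        _ ≤ (specNorm V * ‖x‖) ^ 2 := by nlinarith [norm_nonneg (T x), norm_nonneg x]
        _ = specNorm V ^ 2 * ‖x‖ ^ 2 := by ring
        _ = specNorm V ^ 2 * ∑ k, A i k * A i k := by rw [hnx]
    calc frobInner (A * Vᵀ) (A * Vᵀ) = ∑ i, ∑ j, (A * Vᵀ) i j * (A * Vᵀ) i j := rfl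
      _ ≤ ∑ i, specNorm V ^ 2 * ∑ k, A i k * A i k :=
          Finset.sum_le_sum fun i _ => hrow i
      _ = specNorm V ^ 2 * frobInner A A := by rw [← Finset.mul_sum]; rfl
  have h2 : frobNorm (A * Vᵀ) ^ 2 ≤ (frobNorm A * specNorm V) ^ 2 := by
    rw [frobNorm_sq]
    calc frobInner (A * Vᵀ) (A * Vᵀ) ≤ specNorm V ^ 2 * frobInner A A := key
      _ = (frobNorm A * specNorm V) ^ 2 := by rw [mul_pow, frobNorm_sq]; ring
  nlinarith [frobNorm_nonneg (A * Vᵀ), frobNorm_nonneg A, hs, mul_nonneg (frobNorm_nonneg A) hs]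

lemma descent_core {n m : ℕ} (f : Matrix (Fin n) (Fin m) ℝ → ℝ)
    (f' : Matrix (Fin n) (Fin m) ℝ → Matrix (Fin n) (Fin m) ℝ) (Lf : ℝ)
    (hdiff : Differentiable ℝ f)
    (hgrad : ∀ X H, fderiv ℝ f X H = frobInner (f' X) H)
    (hlip : ∀ X Y, frobNorm (f' X - f' Y) ≤ Lf * frobNorm (X - Y))
    (X Y : Matrix (Fin n) (Fin m) ℝ) :
    |f Y - f X - frobInner (f' X) (Y - X)| ≤ Lf / 2 * frobNorm (Y - X) ^ 2 := by
  set D := Y - X with hD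
  set c : ℝ := frobInner (f' X) D with hc
  set g : ℝ → ℝ := fun t => f (X + t • D) - f X - t * c with hg
  set g' : ℝ → ℝ := fun t => frobInner (f' (X + t • D) - f' X) D with hg'
  have hder : ∀ t : ℝ, HasDerivAt g (g' t) t := by
    intro t
    have h1 : HasDerivAt (fun t : ℝ => X + t • D) D t := by
      have h1' := ((hasDerivAt_id' t).smul_const D).const_add X
      rw [one_smul] at h1'
      exact h1'
    have h2 : HasDerivAt (fun t : ℝ => f (X + t • D)) (fderiv ℝ f (X + t • D) D) t :=
      (hdiff (X + t • D)).hasFDerivAt.comp_hasDerivAt t h1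
    have h3 : HasDerivAt g (fderiv ℝ f (X + t • D) D - c) t := by
      exact (h2.sub_const (f X)).sub (hasDerivAt_mul_const c)
    have : fderiv ℝ f (X + t • D) D - c = g' t := by
      show _ = frobInner (f' (X + t • D) - f' X) D
      rw [hgrad, hc, frobInner_sub_left]
    rwa [this] at h3
  set nD := frobNorm D with hnD
  have hbound : ∀ t ∈ Set.Ico (0:ℝ) 1, ‖g' t‖ ≤ (Lf * nD ^ 2) * t := by
    intro t ht
    have ht0 : (0:ℝ) ≤ t := ht.1
    have h1 : |frobInner (f' (X + t • D) - f' X) D| ≤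
        frobNorm (f' (X + t • D) - f' X) * nD := frobInner_cs _ _
    have h2 : frobNorm (f' (X + t • D) - f' X) ≤ Lf * (t * nD) := by
      have := hlip (X + t • D) X
      simpa [add_sub_cancel_left, frobNorm_smul, abs_of_nonneg ht0] using this
    have h0 : 0 ≤ frobNorm (f' (X + t • D) - f' X) := frobNorm_nonneg _
    have hnD0 : 0 ≤ nD := frobNorm_nonneg _
    calc ‖g' t‖ = |frobInner (f' (X + t • D) - f' X) D| := rfl
      _ ≤ frobNorm (f' (X + t • D) - f' X) * nD := h1
      _ ≤ (Lf * (t * nD)) * nD := mul_le_mul_of_nonneg_right h2 hnD0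
      _ = (Lf * nD ^ 2) * t := by ring
  have hB : ∀ t : ℝ, HasDerivAt (fun t : ℝ => Lf * nD ^ 2 / 2 * t ^ 2) ((Lf * nD ^ 2) * t) t := by
    intro t
    have := (hasDerivAt_pow 2 t).const_mul (Lf * nD ^ 2 / 2)
    rw [show Lf * nD ^ 2 * t = Lf * nD ^ 2 / 2 * (((2:ℕ):ℝ) * t ^ (2 - 1)) by push_cast; ring]
    exact this
  have key := image_norm_le_of_norm_deriv_right_le_deriv_boundary
    (f := g) (f' := g') (a := 0) (b := 1)
    (fun t _ => (hder t).continuousAt.continuousWithinAt)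
    (fun t _ => (hder t).hasDerivWithinAt)
    (B := fun t => Lf * nD ^ 2 / 2 * t ^ 2) (B' := fun t => (Lf * nD ^ 2) * t)
    (by simp [hg]) hB hbound
  have h1 := key (Set.right_mem_Icc.mpr zero_le_one)
  have hg1 : g 1 = f Y - f X - frobInner (f' X) (Y - X) := by
    simp [hg, hD, hc]
  rw [hg1] at h1
  calc |f Y - f X - frobInner (f' X) (Y - X)| ≤ Lf * nD ^ 2 / 2 * 1 ^ 2 := h1
    _ = Lf / 2 * frobNorm (Y - X) ^ 2 := by rw [hnD]; ring

/-- one-block descent property of the majorized proximal step for the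
column `ℓ_{2,0}`-regularized factorization model. -/
theorem one_block_majorization_descent {n m r : ℕ}
    (f : Matrix (Fin n) (Fin m) ℝ → ℝ) (f' : Matrix (Fin n) (Fin m) ℝ → Matrix (Fin n) (Fin m) ℝ)
    (Lf : ℝ)
    (hdiff : Differentiable ℝ f)
    (hgrad : ∀ X H, fderiv ℝ f X H = frobInner (f' X) H)
    (hlip : ∀ X Y, frobNorm (f' X - f' Y) ≤ Lf * frobNorm (X - Y))
    (lam mu : ℝ) (hlam : 0 < lam) (hmu : 0 ≤ mu)
    (V : Matrix (Fin m) (Fin r) ℝ) (τ : ℝ) (hτ : τ = Lf * specNorm V ^ 2)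
    (Ut : Matrix (Fin n) (Fin r) ℝ) (γ : ℝ) (hγ : γ > τ)
    (Uplus : Matrix (Fin n) (Fin r) ℝ)
    (hmin : ∀ U : Matrix (Fin n) (Fin r) ℝ,
      frobInner (f' (Ut * Vᵀ) * V) Uplus + γ / 2 * frobInner (Uplus - Ut) (Uplus - Ut) +
          mu / 2 * frobInner Uplus Uplus + lam * (l20 Uplus : ℝ) ≤
        frobInner (f' (Ut * Vᵀ) * V) U + γ / 2 * frobInner (U - Ut) (U - Ut) +
          mu / 2 * frobInner U U + lam * (l20 U : ℝ)) :
    ∀ U : Matrix (Fin n) (Fin r) ℝ,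
      f (Uplus * Vᵀ) + mu / 2 * frobInner Uplus Uplus + lam * (l20 Uplus : ℝ) +
          (γ - τ) / 2 * frobInner (Uplus - Ut) (Uplus - Ut) ≤
        f (U * Vᵀ) + mu / 2 * frobInner U U + lam * (l20 U : ℝ) +
          (γ + τ) / 2 * frobInner (U - Ut) (U - Ut) := by
  intro U
  rcases Nat.eq_zero_or_pos n with hn | hn
  · -- trivial case `n = 0`
    subst hn
    have hUU : Uplus * Vᵀ = U * Vᵀ := by ext i j; exact i.elim0
    have hfr : ∀ A B : Matrix (Fin 0) (Fin r) ℝ, frobInner A B = 0 := by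
      intro A B; simp [frobInner]
    have hl : ∀ A : Matrix (Fin 0) (Fin r) ℝ, l20 A = 0 := by
      intro A
      have : {j : Fin r | (fun i : Fin 0 => A i j) ≠ 0} = ∅ := by
        ext j
        simp only [Set.mem_setOf_eq, Set.mem_empty_iff_false, iff_false, ne_eq, not_not]
        funext i; exact i.elim0
      rw [l20, this, Set.ncard_empty]
    rw [hUU, hfr, hfr, hfr, hfr, hl, hl]
    norm_num
  rcases Nat.eq_zero_or_pos m with hm | hm
  · -- degenerate case `m = 0`: `f` is constant and the gradient term vanishes
    subst hm
    have hUU : Uplus * Vᵀ = U * Vᵀ := by ext i j; exact j.elim0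
    have hG : ∀ W : Matrix (Fin n) (Fin r) ℝ, frobInner (f' (Ut * Vᵀ) * V) W = 0 := by
      intro W; simp [frobInner, Matrix.mul_apply]
    have hs : specNorm V = 0 := by
      rw [specNorm]
      refine le_antisymm (ContinuousLinearMap.opNorm_le_bound _ le_rfl fun x => ?_)
        (norm_nonneg _)
      have : ‖(LinearMap.toContinuousLinearMap (Matrix.toEuclideanLin V)) x‖ = 0 := by
        rw [EuclideanSpace.norm_eq]
        simp
      rw [this]
      positivity
    have hτ0 : τ = 0 := by rw [hτ, hs]; ring
    have h3 := hmin U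
    rw [hG, hG] at h3
    rw [hUU, hτ0]
    linarith
  -- main case: `n ≥ 1`, `m ≥ 1`, hence `Lf ≥ 0`
  have hLf : 0 ≤ Lf := by
    set Y : Matrix (Fin n) (Fin m) ℝ := fun _ _ => 1 with hY
    have hfr : frobInner Y Y = (n : ℝ) * m := by
      simp [frobInner, hY]
    have hpos : 0 < frobNorm Y := by
      rw [frobNorm, hfr]
      exact Real.sqrt_pos.mpr (by positivity)
    have := hlip Y 0
    rw [sub_zero] at this
    nlinarith [frobNorm_nonneg (f' Y - f' 0)]
  have hs : 0 ≤ specNorm V := norm_nonneg _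
  -- the key one-step descent estimate
  have key : ∀ W : Matrix (Fin n) (Fin r) ℝ,
      |f (W * Vᵀ) - f (Ut * Vᵀ) - frobInner (f' (Ut * Vᵀ) * V) (W - Ut)| ≤
        τ / 2 * frobInner (W - Ut) (W - Ut) := by
    intro W
    have hd := descent_core f f' Lf hdiff hgrad hlip (Ut * Vᵀ) (W * Vᵀ)
    have hsub : W * Vᵀ - Ut * Vᵀ = (W - Ut) * Vᵀ := (Matrix.sub_mul _ _ _).symm
    rw [hsub, frobInner_mul_adjoint] at hd
    have hle : frobNorm ((W - Ut) * Vᵀ) ≤ frobNorm (W - Ut) * specNorm V :=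
      frobNorm_mul_transpose_le _ _
    have h2 : Lf / 2 * frobNorm ((W - Ut) * Vᵀ) ^ 2 ≤
        τ / 2 * frobInner (W - Ut) (W - Ut) := by
      rw [hτ, ← frobNorm_sq]
      have hsq : frobNorm ((W - Ut) * Vᵀ) ^ 2 ≤ specNorm V ^ 2 * frobNorm (W - Ut) ^ 2 := by
        nlinarith [frobNorm_nonneg ((W - Ut) * Vᵀ), frobNorm_nonneg (W - Ut), hs, hle]
      calc Lf / 2 * frobNorm ((W - Ut) * Vᵀ) ^ 2
          ≤ Lf / 2 * (specNorm V ^ 2 * frobNorm (W - Ut) ^ 2) :=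
            mul_le_mul_of_nonneg_left hsq (by linarith)
        _ = Lf * specNorm V ^ 2 / 2 * frobNorm (W - Ut) ^ 2 := by ring
    exact hd.trans h2
  have k1 := abs_le.mp (key Uplus)
  have k2 := abs_le.mp (key U)
  have h3 := hmin U
  rw [frobInner_sub_right (f' (Ut * Vᵀ) * V) Uplus Ut] at k1
  rw [frobInner_sub_right (f' (Ut * Vᵀ) * V) U Ut] at k2
  linarith [k1.1, k1.2, k2.1, k2.2]
end
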